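/- arXiv:1905.06584 — 5 statements merged into one kernel-verified Lean document; each statement's English description precedes it below -/
import Mathlib

section
/- Let p ∈ ℕ, x₀ > 0, R > 0, and let W be either the weight W_{[-R,R]} or W = cosh(·/R). With the constant weight w = 1 in the first variable, the bounded operator 𝒦 : L²(1⊗W^{⊗p}) → L²(ℝ×[-1,1]^p), 𝒦f(t,u) = 𝓕[f](t, x₀ t u)·(x₀|t|)^{p/2}, is not a compact operator. -/
open MeasureTheory Set
open scoped ENNReal

/-- The Fourier transform on `ℝ^{1+p} ≅ ℝ × (Fin p → ℝ)` with the paper's convention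
`𝓕[f](t,v) = ∫ e^{i(t a + v·b)} f(a,b) da db`. -/
noncomputable def paperFourier (p : ℕ) (f : ℝ × (Fin p → ℝ) → ℂ) (t : ℝ) (v : Fin p → ℝ) : ℂ :=
  ∫ q : ℝ × (Fin p → ℝ), Complex.exp (Complex.I * ((t * q.1 + ∑ j, v j * q.2 j : ℝ) : ℂ)) * f q

/-- The weight `W_{[-R,R]}`, equal to `1` on `[-R,R]` and `+∞` outside. -/
noncomputable def boxWeight (R : ℝ) : ℝ → ℝ≥0∞ := fun b => if |b| ≤ R then 1 else ⊤

/-- The weight `cosh (·/R)`. -/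
noncomputable def coshWeight (R : ℝ) : ℝ → ℝ≥0∞ := fun b => ENNReal.ofReal (Real.cosh (b / R))


open scoped FourierTransform

noncomputable def indC (R : ℝ) : ℝ → ℂ := (Set.Icc (-R) R).indicator 1

noncomputable def psiR (R v : ℝ) : ℂ :=
  ∫ a : ℝ, Complex.exp (Complex.I * ((v * a : ℝ) : ℂ)) * indC R a

lemma mul_indC (R : ℝ) (f : ℝ → ℂ) (a : ℝ) :
    f a * indC R a = (Set.Icc (-R) R).indicator f a := by
  simp only [indC, Set.indicator]
  split <;> simp

lemma psiR_eq (R v : ℝ) :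
    psiR R v = ∫ a in Set.Icc (-R) R, Complex.exp (Complex.I * ((v * a : ℝ) : ℂ)) := by
  rw [psiR, ← integral_indicator measurableSet_Icc]
  exact integral_congr_ae (Filter.Eventually.of_forall fun a => mul_indC R (fun a => Complex.exp (Complex.I * ((v * a : ℝ) : ℂ))) a)

lemma psiR_re_pos {R v : ℝ} (hR : 0 < R) (hv : |v| * R < Real.pi / 2) :
    0 < (psiR R v).re := by
  have hcont : Continuous fun a : ℝ => Complex.exp (Complex.I * ((v * a : ℝ) : ℂ)) := by
    fun_prop
  have hint : IntegrableOn (fun a : ℝ => Complex.exp (Complex.I * ((v * a : ℝ) : ℂ)))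
      (Set.Icc (-R) R) volume := hcont.integrableOn_Icc
  rw [psiR_eq]
  have hre : (∫ a in Set.Icc (-R) R, Complex.exp (Complex.I * ((v * a : ℝ) : ℂ))).re
      = ∫ a in Set.Icc (-R) R, Real.cos (v * a) := by
    rw [← RCLike.re_to_complex, ← integral_re hint]
    refine integral_congr_ae (Filter.Eventually.of_forall fun a => ?_)
    show (Complex.exp (Complex.I * ((v * a : ℝ) : ℂ))).re = Real.cos (v * a)
    rw [mul_comm, Complex.exp_ofReal_mul_I_re]
  rw [hre]
  have hc : 0 < Real.cos (|v| * R) := by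
    apply Real.cos_pos_of_mem_Ioo
    constructor
    · nlinarith [abs_nonneg v, Real.pi_pos]
    · exact hv
  have hbound : ∀ a ∈ Set.Icc (-R) R, Real.cos (|v| * R) ≤ Real.cos (v * a) := by
    intro a ha
    rw [← Real.cos_abs (v * a)]
    apply Real.cos_le_cos_of_nonneg_of_le_pi (abs_nonneg _)
    · nlinarith [Real.pi_pos]
    · rw [abs_mul]
      have : |a| ≤ R := abs_le.mpr ⟨ha.1, ha.2⟩
      exact mul_le_mul_of_nonneg_left this (abs_nonneg v)
  have hkey := setIntegral_ge_of_const_le (μ := volume) measurableSet_Icc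
    (by simp [Real.volume_Icc]) hbound
    ((Real.continuous_cos.comp (continuous_const.mul continuous_id)).integrableOn_Icc)
  refine lt_of_lt_of_le ?_ hkey
  have : (volume (Set.Icc (-R) R)).toReal = 2 * R := by
    rw [Real.volume_Icc, ENNReal.toReal_ofReal (by linarith)]
    ring
  rw [measureReal_def, this, smul_eq_mul]
  positivity

lemma psiR_ne_zero {R v : ℝ} (hR : 0 < R) (hv : |v| * R < Real.pi / 2) : psiR R v ≠ 0 := by
  intro h
  have := psiR_re_pos hR hv
  rw [h] at this
  simp at this

lemma shift_integral (R t n : ℝ) :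
    (∫ a : ℝ, Complex.exp (Complex.I * ((t * a : ℝ) : ℂ)) * indC R (a - n))
      = Complex.exp (Complex.I * ((t * n : ℝ) : ℂ)) * psiR R t := by
  have h := integral_add_right_eq_self (μ := volume)
    (fun a : ℝ => Complex.exp (Complex.I * ((t * a : ℝ) : ℂ)) * indC R (a - n)) n
  rw [← h]
  rw [psiR, ← MeasureTheory.integral_const_mul]
  refine integral_congr_ae (Filter.Eventually.of_forall fun a => ?_)
  simp only [add_sub_cancel_right]
  rw [← mul_assoc, ← Complex.exp_add]
  congr 2
  push_cast
  ring

lemma gfun_paperFourier (R : ℝ) (p : ℕ) (n t : ℝ) (v : Fin p → ℝ) :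
    paperFourier p (fun q => indC R (q.1 - n) * ∏ j, indC R (q.2 j)) t v
      = (Complex.exp (Complex.I * ((t * n : ℝ) : ℂ)) * psiR R t) * ∏ j, psiR R (v j) := by
  rw [paperFourier]
  have h1 : ∀ q : ℝ × (Fin p → ℝ),
      Complex.exp (Complex.I * ((t * q.1 + ∑ j, v j * q.2 j : ℝ) : ℂ)) *
        (indC R (q.1 - n) * ∏ j, indC R (q.2 j))
      = (fun a => Complex.exp (Complex.I * ((t * a : ℝ) : ℂ)) * indC R (a - n)) q.1 *
        (fun b : Fin p → ℝ => ∏ j, Complex.exp (Complex.I * ((v j * b j : ℝ) : ℂ)) * indC R (b j)) q.2 := by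
    intro q
    have hcast : ((t * q.1 + ∑ j, v j * q.2 j : ℝ) : ℂ)
        = ((t * q.1 : ℝ) : ℂ) + ∑ j, ((v j * q.2 j : ℝ) : ℂ) := by
      push_cast; ring
    simp only [hcast, mul_add, Complex.exp_add, Finset.mul_sum, Complex.exp_sum,
      Finset.prod_mul_distrib]
    ring
  rw [integral_congr_ae (Filter.Eventually.of_forall h1)]
  rw [MeasureTheory.Measure.volume_eq_prod, MeasureTheory.integral_prod_mul
    (f := fun a => Complex.exp (Complex.I * ((t * a : ℝ) : ℂ)) * indC R (a - n))
    (g := fun b : Fin p → ℝ => ∏ j, Complex.exp (Complex.I * ((v j * b j : ℝ) : ℂ)) * indC R (b j))]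
  rw [shift_integral]
  congr 1
  rw [MeasureTheory.integral_fintype_prod_volume_eq_prod
    (f := fun (j : Fin p) (x : ℝ) => Complex.exp (Complex.I * ((v j * x : ℝ) : ℂ)) * indC R x)]
  rfl

def QQ (p : ℕ) (R n : ℝ) : Set (ℝ × (Fin p → ℝ)) :=
  Set.Icc (n - R) (n + R) ×ˢ Set.pi Set.univ fun _ : Fin p => Set.Icc (-R) R

lemma QQ_measurableSet (p : ℕ) (R n : ℝ) : MeasurableSet (QQ p R n) :=
  measurableSet_Icc.prod (MeasurableSet.univ_pi fun _ => measurableSet_Icc)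

lemma gfun_eq_indicator (p : ℕ) (R n : ℝ) :
    (fun q : ℝ × (Fin p → ℝ) => indC R (q.1 - n) * ∏ j, indC R (q.2 j))
      = (QQ p R n).indicator (fun _ => (1 : ℂ)) := by
  classical
  funext q
  simp only [indC, Set.indicator_apply, Pi.one_apply, Set.mem_Icc, QQ, Set.mem_prod,
    Set.mem_pi, Set.mem_univ, true_implies]
  rw [Finset.prod_boole, ite_mul, one_mul, zero_mul]
  by_cases hA : -R ≤ q.1 - n ∧ q.1 - n ≤ R
  · by_cases hB : ∀ j : Fin p, j ∈ Finset.univ → -R ≤ q.2 j ∧ q.2 j ≤ R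
    · rw [if_pos hA, if_pos hB, if_pos]
      exact ⟨⟨by linarith [hA.1], by linarith [hA.2]⟩, fun j => hB j (Finset.mem_univ j)⟩
    · rw [if_pos hA, if_neg hB, if_neg]
      intro h
      exact hB fun j _ => h.2 j
  · rw [if_neg hA, if_neg]
    intro h
    exact hA ⟨by linarith [h.1.1], by linarith [h.1.2]⟩

lemma volume_QQ (p : ℕ) (R n : ℝ) :
    volume (QQ p R n) = ENNReal.ofReal (2 * R) * ENNReal.ofReal (2 * R) ^ p := by
  rw [QQ, MeasureTheory.Measure.volume_eq_prod, MeasureTheory.Measure.prod_prod,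
    Real.volume_Icc, MeasureTheory.volume_pi, MeasureTheory.Measure.pi_pi]
  simp only [Real.volume_Icc]
  rw [Finset.prod_const, Finset.card_univ, Fintype.card_fin]
  congr 2 <;> ring


set_option maxHeartbeats 2000000 in
/-- Proposition 1 (non-compactness): with `w = 1`, the space `L²(1 ⊗ W^{⊗p})` is realized as
`Lp ℂ 2` of Lebesgue measure with density `∏_j W(b_j)`, and `L²(ℝ × [-1,1]^p)` as `Lp ℂ 2` of
the restricted Lebesgue measure.  Any continuous linear operator `K` between them that agrees
with `f ↦ 𝓕[f](t, x₀ t u) (x₀|t|)^{p/2}` (on integrable representatives, a dense class) is not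
a compact operator. -/
theorem K_not_compact
    (p : ℕ) (x₀ R : ℝ) (hx₀ : 0 < x₀) (hR : 0 < R)
    (W : ℝ → ℝ≥0∞) (hW : W = boxWeight R ∨ W = coshWeight R)
    (K : Lp ℂ 2 (volume.withDensity fun q : ℝ × (Fin p → ℝ) => ∏ j, W (q.2 j)) →L[ℂ]
        Lp ℂ 2 (volume.restrict
          (Set.univ ×ˢ Set.pi Set.univ (fun _ : Fin p => Set.Icc (-1 : ℝ) 1))))
    (hK : ∀ f : Lp ℂ 2 (volume.withDensity fun q : ℝ × (Fin p → ℝ) => ∏ j, W (q.2 j)),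
        Integrable (⇑f) volume →
        ⇑(K f) =ᵐ[volume.restrict
            (Set.univ ×ˢ Set.pi Set.univ (fun _ : Fin p => Set.Icc (-1 : ℝ) 1))]
          fun q => paperFourier p (⇑f) q.1 ((x₀ * q.1) • q.2) *
            Complex.ofReal ((x₀ * |q.1|) ^ ((p : ℝ) / 2))) :
    ¬ IsCompactOperator K := by
  classical
  revert K
  set B1 : Set (Fin p → ℝ) := Set.pi Set.univ (fun _ : Fin p => Set.Icc (-1 : ℝ) 1) with hB1def
  set S : Set (ℝ × (Fin p → ℝ)) := Set.univ ×ˢ B1 with hSdef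
  set D : ℝ × (Fin p → ℝ) → ℝ≥0∞ := fun q => ∏ j, W (q.2 j) with hDdef
  intro K hK hc
  set Cb : ℝ≥0∞ := ENNReal.ofReal (Real.cosh 1) + 1 with hCbdef
  set hfun : ℝ × (Fin p → ℝ) → ℂ := fun q =>
    (psiR R q.1 * ∏ j, psiR R ((x₀ * q.1) * q.2 j)) *
      Complex.ofReal ((x₀ * |q.1|) ^ ((p : ℝ) / 2)) with hfundef
  -- basic facts about the weight
  have hWmeas : Measurable W := by
    rcases hW with h | h
    · subst h
      exact Measurable.ite (measurableSet_le (_root_.continuous_abs.measurable) measurable_const)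
        measurable_const measurable_const
    · subst h
      exact (Real.continuous_cosh.measurable.comp (measurable_id.div_const R)).ennreal_ofReal
  have hWpos : ∀ b, W b ≠ 0 := by
    rcases hW with h | h <;> subst h <;> intro b
    · unfold boxWeight; split
      · exact one_ne_zero
      · exact ENNReal.top_ne_zero
    · unfold coshWeight
      simp only [ne_eq, ENNReal.ofReal_eq_zero, not_le]
      exact Real.cosh_pos _
  have hWle : ∀ b : ℝ, |b| ≤ R → W b ≤ Cb := by
    rcases hW with h | h <;> subst h <;> intro b hb
    · unfold boxWeight
      rw [if_pos hb]
      exact le_add_self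
    · unfold coshWeight
      refine le_trans ?_ le_self_add
      apply ENNReal.ofReal_le_ofReal
      rw [Real.cosh_le_cosh]
      rw [abs_div, abs_of_pos hR, abs_one]
      rw [div_le_one hR]
      exact hb
  have hDmeas : Measurable D :=
    Finset.measurable_prod _ fun j _ =>
      hWmeas.comp ((measurable_pi_apply j).comp measurable_snd)
  have hDpos : ∀ q, D q ≠ 0 := fun q =>
    Finset.prod_ne_zero_iff.mpr fun j _ => hWpos _
  have hac : (volume : Measure (ℝ × (Fin p → ℝ))) ≪ volume.withDensity D :=
    withDensity_absolutelyContinuous' hDmeas.aemeasurable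
      (Filter.Eventually.of_forall fun q => hDpos q)
  -- measure of the boxes
  set B : ℝ≥0∞ := Cb ^ p * (ENNReal.ofReal (2 * R) * ENNReal.ofReal (2 * R) ^ p) with hBdef
  have hBne : B ≠ ⊤ := by
    rw [hBdef, hCbdef]
    refine ENNReal.mul_ne_top (ENNReal.pow_ne_top ?_) (ENNReal.mul_ne_top ENNReal.ofReal_ne_top
      (ENNReal.pow_ne_top ENNReal.ofReal_ne_top))
    exact ENNReal.add_ne_top.mpr ⟨ENNReal.ofReal_ne_top, ENNReal.one_ne_top⟩
  have hμQ : ∀ n : ℝ, (volume.withDensity D) (QQ p R n) ≤ B := by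
    intro n
    rw [withDensity_apply _ (QQ_measurableSet p R n)]
    calc ∫⁻ q in QQ p R n, D q ∂volume
        ≤ ∫⁻ _ in QQ p R n, Cb ^ p ∂volume := by
          refine setLIntegral_mono measurable_const fun q hq => ?_
          rw [hDdef]
          calc ∏ j, W (q.2 j) ≤ ∏ _j : Fin p, Cb := by
                refine Finset.prod_le_prod' fun j _ => hWle _ ?_
                have := hq.2 j (Set.mem_univ j)
                exact abs_le.mpr ⟨this.1, this.2⟩
            _ = Cb ^ p := by rw [Finset.prod_const, Finset.card_univ, Fintype.card_fin]
      _ = Cb ^ p * volume (QQ p R n) := setLIntegral_const _ _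
      _ = B := by rw [volume_QQ, hBdef]
  have hvolQQ : ∀ n : ℝ, volume (QQ p R n) < ⊤ := fun n => by
    rw [volume_QQ]
    exact ENNReal.mul_lt_top ENNReal.ofReal_lt_top (ENNReal.pow_lt_top ENNReal.ofReal_lt_top)
  -- the sequence in the domain
  have hmem : ∀ n : ℕ, MemLp ((QQ p R n).indicator fun _ => (1 : ℂ)) 2
      (volume.withDensity D) := fun n =>
    memLp_indicator_const 2 (QQ_measurableSet p R n) 1
      (Or.inr (lt_of_le_of_lt (hμQ n) hBne.lt_top).ne)
  set fL : ℕ → Lp ℂ 2 (volume.withDensity D) := fun n => (hmem n).toLp _ with hfLdef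
  have hcoe : ∀ n : ℕ, ⇑(fL n) =ᵐ[volume] (QQ p R n).indicator fun _ => (1 : ℂ) := fun n =>
    ((hmem n).coeFn_toLp).filter_mono hac.ae_le
  have hInt : ∀ n : ℕ, Integrable (⇑(fL n)) volume := by
    intro n
    refine Integrable.congr ?_ (hcoe n).symm
    rw [integrable_indicator_iff (QQ_measurableSet p R n)]
    exact integrableOn_const (hvolQQ n).ne
  -- representation of K (fL n)
  have hKrep : ∀ n : ℕ, ⇑(K (fL n)) =ᵐ[volume.restrict S]
      fun q => Complex.exp (Complex.I * ((q.1 * n : ℝ) : ℂ)) * hfun q := by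
    intro n
    refine (hK (fL n) (hInt n)).trans (Filter.Eventually.of_forall fun q => ?_)
    have hpf : paperFourier p (⇑(fL n)) q.1 ((x₀ * q.1) • q.2)
        = paperFourier p ((QQ p R n).indicator fun _ => (1 : ℂ)) q.1 ((x₀ * q.1) • q.2) := by
      unfold paperFourier
      refine integral_congr_ae ?_
      filter_upwards [hcoe n] with x hx
      rw [hx]
    beta_reduce
    rw [hpf, ← gfun_eq_indicator, gfun_paperFourier]
    simp only [hfundef, Pi.smul_apply, smul_eq_mul]
    ring
  -- all the images have the same norm
  have hnormexp : ∀ (x : ℝ) (z : ℂ), ‖Complex.exp (Complex.I * (x : ℂ)) * z‖ = ‖z‖ := by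
    intro x z
    rw [norm_mul, mul_comm Complex.I ((x : ℝ) : ℂ), Complex.norm_exp_ofReal_mul_I, one_mul]
  have hnorm : ∀ n : ℕ, ‖K (fL n)‖ = ‖K (fL 0)‖ := by
    intro n
    rw [MeasureTheory.Lp.norm_def, MeasureTheory.Lp.norm_def]
    congr 1
    rw [eLpNorm_congr_ae (hKrep n), eLpNorm_congr_ae (hKrep 0)]
    refine eLpNorm_congr_norm_ae (Filter.Eventually.of_forall fun q => ?_)
    rw [hnormexp, hnormexp]
  -- boundedness of the sequence
  have hbdd : Bornology.IsBounded (Set.range fL) := by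
    rw [isBounded_iff_forall_norm_le]
    refine ⟨(B ^ (1 / 2 : ℝ)).toReal, ?_⟩
    rintro x ⟨n, rfl⟩
    rw [hfLdef]
    rw [MeasureTheory.Lp.norm_toLp _ (hmem n)]
    rw [eLpNorm_indicator_const (QQ_measurableSet p R n) two_ne_zero ENNReal.ofNat_ne_top]
    refine ENNReal.toReal_mono (by simp [ENNReal.rpow_ne_top_of_nonneg, hBne]) ?_
    simp only [nnnorm_one, enorm_one, ENNReal.coe_one, one_mul, ENNReal.toReal_ofNat]
    exact ENNReal.rpow_le_rpow (hμQ n) (by norm_num)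
  -- compactness gives a convergent subsequence
  have hcl : IsCompact (closure (⇑K '' Set.range fL)) :=
    IsCompactOperator.isCompact_closure_image_of_bounded (f := K.toLinearMap) hc hbdd
  have hmemcl : ∀ n : ℕ, K (fL n) ∈ closure (⇑K '' Set.range fL) := fun n =>
    subset_closure ⟨fL n, Set.mem_range_self n, rfl⟩
  obtain ⟨y, -, φ, hφ, hconv⟩ := hcl.tendsto_subseq hmemcl
  -- the pairing function
  set F : (ℝ × (Fin p → ℝ)) → ℂ := fun q => (starRingEnd ℂ) (⇑y q) * hfun q with hFdef
  have hfun_eq_rep0 : ⇑(K (fL 0)) =ᵐ[volume.restrict S] hfun := by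
    refine (hKrep 0).trans (Filter.Eventually.of_forall fun q => ?_)
    norm_num
  have hF : Integrable F (volume.restrict S) := by
    have h1 : Integrable (fun q => (inner ℂ (⇑y q) (⇑(K (fL 0)) q) : ℂ))
        (volume.restrict S) := MeasureTheory.L2.integrable_inner y (K (fL 0))
    refine Integrable.congr h1 ?_
    filter_upwards [hfun_eq_rep0] with q hq
    rw [RCLike.inner_apply, hq, mul_comm]
  have hInnerEq : ∀ n : ℕ, (inner ℂ y (K (fL n)) : ℂ)
      = ∫ q, Complex.exp (Complex.I * ((q.1 * n : ℝ) : ℂ)) * F q ∂(volume.restrict S) := by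
    intro n
    rw [MeasureTheory.L2.inner_def]
    refine integral_congr_ae ?_
    filter_upwards [hKrep n] with q hq
    rw [RCLike.inner_apply, hq, hFdef]
    ring
  -- Riemann-Lebesgue
  have hRLfull : Filter.Tendsto
      (fun n : ℕ => ∫ q, Complex.exp (Complex.I * ((q.1 * n : ℝ) : ℂ)) * F q ∂(volume.restrict S))
      Filter.atTop (nhds 0) := by
    have hSrw : volume.restrict S = (volume : Measure ℝ).prod (volume.restrict B1) := by
      rw [hSdef, MeasureTheory.Measure.volume_eq_prod, ← MeasureTheory.Measure.prod_restrict,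
        Measure.restrict_univ]
    have hFi : Integrable F ((volume : Measure ℝ).prod (volume.restrict B1)) := by
      rw [← hSrw]; exact hF
    have hGi : Integrable (fun t => ∫ u, F (t, u) ∂(volume.restrict B1)) volume :=
      hFi.integral_prod_left
    have key : ∀ n : ℕ, (∫ q, Complex.exp (Complex.I * ((q.1 * n : ℝ) : ℂ)) * F q
          ∂(volume.restrict S))
        = ∫ t : ℝ, Complex.exp (Complex.I * ((t * n : ℝ) : ℂ)) *
            ∫ u, F (t, u) ∂(volume.restrict B1) := by
      intro n
      rw [hSrw]
      have hfint : Integrable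
          (fun q : ℝ × (Fin p → ℝ) => Complex.exp (Complex.I * ((q.1 * n : ℝ) : ℂ)) * F q)
          ((volume : Measure ℝ).prod (volume.restrict B1)) := by
        refine hFi.bdd_mul (c := 1) ?_ (Filter.Eventually.of_forall fun q => by rw [mul_comm, Complex.norm_exp_ofReal_mul_I])
        exact Continuous.aestronglyMeasurable (by fun_prop)
      rw [MeasureTheory.integral_prod _ hfint]
      refine integral_congr_ae (Filter.Eventually.of_forall fun t => ?_)
      simp only [MeasureTheory.integral_const_mul]
    simp only [key]
    have hRL := Real.tendsto_integral_exp_smul_cocompact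
      (fun t : ℝ => ∫ u, F (t, u) ∂(volume.restrict B1))
    have hmap : Filter.Tendsto (fun n : ℕ => -((n : ℝ) / (2 * Real.pi))) Filter.atTop
        (Filter.cocompact ℝ) := by
      rw [cocompact_eq_atBot_atTop]
      refine Filter.Tendsto.mono_right ?_ le_sup_left
      exact Filter.tendsto_neg_atTop_atBot.comp
        (tendsto_natCast_atTop_atTop.atTop_div_const (by positivity))
    have hcomp := hRL.comp hmap
    refine hcomp.congr fun n => ?_
    refine integral_congr_ae (Filter.Eventually.of_forall fun t => ?_)
    show 𝐞 (-(t * -((n : ℝ) / (2 * Real.pi)))) • (∫ u in B1, F (t, u)) =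
      Complex.exp (Complex.I * ((t * n : ℝ) : ℂ)) * ∫ u in B1, F (t, u)
    rw [Circle.smul_def, Real.fourierChar_apply]
    congr 2
    have harg : -(t * -((n : ℝ) / (2 * Real.pi))) = t * n / (2 * Real.pi) := by ring
    rw [harg]
    have h2 : 2 * Real.pi * (t * n / (2 * Real.pi)) = t * n := by
      field_simp
    rw [h2, mul_comm]
  -- conclude y = 0
  have h1 : Filter.Tendsto (fun k => (inner ℂ y (K (fL (φ k))) : ℂ)) Filter.atTop
      (nhds (inner ℂ y y : ℂ)) := Filter.Tendsto.inner tendsto_const_nhds hconv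
  have h2 : Filter.Tendsto (fun k => (inner ℂ y (K (fL (φ k))) : ℂ)) Filter.atTop (nhds 0) := by
    have h2' : Filter.Tendsto (fun n : ℕ => (inner ℂ y (K (fL n)) : ℂ)) Filter.atTop (nhds 0) := by
      simp only [hInnerEq]; exact hRLfull
    exact h2'.comp hφ.tendsto_atTop
  have hyy : (inner ℂ y y : ℂ) = 0 := tendsto_nhds_unique h1 h2
  have hy0 : y = 0 := inner_self_eq_zero.mp hyy
  have h3 : Filter.Tendsto (fun k => ‖K (fL (φ k))‖) Filter.atTop (nhds ‖y‖) := hconv.norm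
  rw [hy0, norm_zero] at h3
  have h4 : ‖K (fL 0)‖ = 0 := by
    refine tendsto_nhds_unique ?_ h3
    simp only [hnorm]
    exact tendsto_const_nhds
  have h5 : K (fL 0) = 0 := norm_eq_zero.mp h4
  have h6 : hfun =ᵐ[volume.restrict S] 0 := by
    have := hfun_eq_rep0
    rw [h5] at this
    exact this.symm.trans (MeasureTheory.Lp.coeFn_zero _ _ _)
  -- but hfun is nonzero on a set of positive measure
  set t2 : ℝ := Real.pi / (4 * R) with ht2def
  set t1 : ℝ := t2 / 2 with ht1def
  set δ : ℝ := min 1 (Real.pi / (4 * R * x₀ * t2)) with hδdef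
  have ht2pos : 0 < t2 := by rw [ht2def]; positivity
  have hδpos : 0 < δ := by
    rw [hδdef]
    refine lt_min one_pos ?_
    positivity
  have hδ1 : δ ≤ 1 := min_le_left _ _
  have hδ2 : δ ≤ Real.pi / (4 * R * x₀ * t2) := min_le_right _ _
  set O : Set (ℝ × (Fin p → ℝ)) := Set.Ioo t1 t2 ×ˢ Set.pi Set.univ
    (fun _ : Fin p => Set.Ioo 0 δ) with hOdef
  have hOmeas : MeasurableSet O :=
    measurableSet_Ioo.prod (MeasurableSet.univ_pi fun _ => measurableSet_Ioo)
  have hOS : O ⊆ S := by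
    rintro ⟨t, u⟩ ⟨ht, hu⟩
    refine ⟨Set.mem_univ _, fun j _ => ?_⟩
    have := hu j (Set.mem_univ j)
    constructor
    · linarith [this.1]
    · linarith [this.2, hδ1]
  have hOfun : ∀ q ∈ O, hfun q ≠ 0 := by
    rintro ⟨t, u⟩ ⟨ht, hu⟩
    have hπ := Real.pi_pos
    have ht0 : 0 < t := lt_trans (by rw [ht1def]; positivity) ht.1
    have htlt : t < t2 := ht.2
    have hψt : psiR R t ≠ 0 := by
      refine psiR_ne_zero hR ?_
      rw [abs_of_pos ht0]
      have : t * R < t2 * R := by nlinarith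
      rw [ht2def] at this
      calc t * R < Real.pi / (4 * R) * R := this
        _ = Real.pi / 4 := by field_simp
        _ < Real.pi / 2 := by linarith
    refine mul_ne_zero (mul_ne_zero hψt ?_) ?_
    · rw [Finset.prod_ne_zero_iff]
      intro j _
      have huj := hu j (Set.mem_univ j)
      refine psiR_ne_zero hR ?_
      have hv0 : 0 < x₀ * t * u j := by
        have := huj.1; positivity
      rw [abs_of_pos hv0]
      have hkey : x₀ * t * u j < x₀ * t2 * δ := by
        refine mul_lt_mul' (mul_le_mul_of_nonneg_left ht.2.le hx₀.le) huj.2 huj.1.le ?_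
        positivity
      have hkey2 : x₀ * t2 * δ ≤ Real.pi / (4 * R) := by
        calc x₀ * t2 * δ ≤ x₀ * t2 * (Real.pi / (4 * R * x₀ * t2)) :=
              mul_le_mul_of_nonneg_left hδ2 (by positivity)
          _ = Real.pi / (4 * R) := by field_simp
      calc x₀ * t * u j * R < Real.pi / (4 * R) * R :=
            mul_lt_mul_of_pos_right (lt_of_lt_of_le hkey hkey2) hR
        _ = Real.pi / 4 := by field_simp
        _ < Real.pi / 2 := by linarith
    · rw [Complex.ofReal_ne_zero]
      refine ne_of_gt (Real.rpow_pos_of_pos ?_ _)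
      rw [abs_of_pos ht0]
      positivity
  have hOnull : (volume.restrict S) O = 0 := by
    refine measure_mono_null (fun q hq => ?_) (ae_iff.mp h6)
    exact hOfun q hq
  have hOvol : (volume.restrict S) O = ENNReal.ofReal (t2 - t1) * ENNReal.ofReal δ ^ p := by
    rw [Measure.restrict_apply hOmeas, Set.inter_eq_self_of_subset_left hOS, hOdef,
      MeasureTheory.Measure.volume_eq_prod, MeasureTheory.Measure.prod_prod, Real.volume_Ioo,
      MeasureTheory.volume_pi, MeasureTheory.Measure.pi_pi]
    simp only [Real.volume_Ioo, sub_zero]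
    rw [Finset.prod_const, Finset.card_univ, Fintype.card_fin]
  rw [hOvol] at hOnull
  have ht12 : 0 < t2 - t1 := by rw [ht1def]; linarith
  have : (ENNReal.ofReal (t2 - t1) * ENNReal.ofReal δ ^ p) ≠ 0 := by
    refine mul_ne_zero ?_ (pow_ne_zero _ ?_)
    · simpa [ENNReal.ofReal_eq_zero, not_le] using ht12
    · simpa [ENNReal.ofReal_eq_zero, not_le] using hδpos
  exact this hOnull
end

section
/- Let p ∈ ℕ, R > 0, let w : ℝ → [1,∞) be measurable with ∫_ℝ 1/w(a) da < ∞, and let f be a probability density on ℝ^{1+p} with M := (∫_{ℝ^{1+p}} f(a,b)² w(a) ∏_{j=1}^p e^{|b_j|/R} da db)^{1/2} < ∞. Then for every ε ∈ (0,1) and every k ∈ {1,…,p}, setting λ = (1−ε)/(2R), one has ∫_{ℝ^{1+p}} e^{λ|b_k|} f(a,b) da db ≤ M · (∫_ℝ 1/w(a) da)^{1/2} · (2R/ε)^{p/2} < ∞. In particular, if (α,β) is a random vector with density f, the Laplace transform E[e^{λ β_k}] is finite for every 0 ≤ λ < 1/(2R). -/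
open MeasureTheory Set Real

lemma integrable_exp_neg_abs' : Integrable (fun x : ℝ => Real.exp (-|x|)) := by
  rw [← integrableOn_univ, ← Set.Iic_union_Ioi (a := (0:ℝ))]
  refine IntegrableOn.union ?_ ?_
  · exact (integrableOn_exp_Iic 0).congr_fun
      (fun x hx => by rw [abs_of_nonpos hx, neg_neg]) measurableSet_Iic
  · exact (exp_neg_integrableOn_Ioi 0 one_pos).congr_fun
      (fun x hx => by rw [abs_of_pos hx]; beta_reduce; rw [neg_one_mul]) measurableSet_Ioi

lemma integral_exp_neg_abs' : ∫ x : ℝ, Real.exp (-|x|) = 2 := by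
  rw [integral_comp_abs (f := fun y => Real.exp (-y))]
  rw [integral_exp_neg_Ioi_zero]; norm_num

lemma exp_abs_integrable {c : ℝ} (hc : 0 < c) :
    Integrable (fun x : ℝ => Real.exp (-(c * |x|))) := by
  have h := (integrable_comp_mul_left_iff (fun y : ℝ => Real.exp (-|y|)) hc.ne').2
    integrable_exp_neg_abs'
  exact h.congr (Filter.Eventually.of_forall fun x => by
    simp only []
    rw [abs_mul, abs_of_pos hc])

lemma exp_abs_integral {c : ℝ} (hc : 0 < c) :
    ∫ x : ℝ, Real.exp (-(c * |x|)) = 2 / c := by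
  have : (fun x : ℝ => Real.exp (-(c * |x|))) = fun x => (fun y => Real.exp (-|y|)) (c * x) := by
    funext x; simp [abs_mul, abs_of_pos hc]
  rw [this, MeasureTheory.Measure.integral_comp_mul_left (fun y : ℝ => Real.exp (-|y|)) c, integral_exp_neg_abs',
    abs_of_pos (inv_pos.2 hc), smul_eq_mul]
  ring

open scoped ENNReal

/-- The tail bound of Section 3 of the paper: if the joint density `f` of `(α,β)` belongs to
the weighted space `L²(w ⊗ (e^{|·|/R})^{⊗p})` with `M` its weighted norm, then for every
`ε ∈ (0,1)` and `k`, with `λ = (1-ε)/(2R)`,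
`E[e^{λ|β_k|}] ≤ M (∫ 1/w)^{1/2} (2R/ε)^{p/2}` (stated below with both sides squared), and in
particular `E[e^{λ β_k}] < ∞` for every `0 ≤ λ < 1/(2R)`. -/
theorem no_heavy_tails_of_weighted_L2
    (p : ℕ) (R : ℝ) (hR : 0 < R)
    (w : ℝ → ℝ) (hw : ∀ a, 1 ≤ w a) (hwm : Measurable w)
    (hwint : (∫⁻ a : ℝ, ENNReal.ofReal (1 / w a)) < ⊤)
    (f : ℝ × (Fin p → ℝ) → ℝ) (hfm : Measurable f) (hf0 : ∀ q, 0 ≤ f q)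
    (hf1 : (∫⁻ q : ℝ × (Fin p → ℝ), ENNReal.ofReal (f q)) = 1)
    (hM : (∫⁻ q : ℝ × (Fin p → ℝ),
        ENNReal.ofReal (f q ^ 2 * w q.1 * ∏ j, Real.exp (|q.2 j| / R))) < ⊤) :
    (∀ ε : ℝ, 0 < ε → ε < 1 → ∀ k : Fin p,
        (∫⁻ q : ℝ × (Fin p → ℝ),
            ENNReal.ofReal (Real.exp ((1 - ε) / (2 * R) * |q.2 k|) * f q)) ^ 2 ≤
          (∫⁻ q : ℝ × (Fin p → ℝ),
              ENNReal.ofReal (f q ^ 2 * w q.1 * ∏ j, Real.exp (|q.2 j| / R))) *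
            (∫⁻ a : ℝ, ENNReal.ofReal (1 / w a)) * ENNReal.ofReal ((2 * R / ε) ^ p)) ∧
      ∀ (k : Fin p) (lam : ℝ), 0 ≤ lam → lam < 1 / (2 * R) →
        (∫⁻ q : ℝ × (Fin p → ℝ), ENNReal.ofReal (Real.exp (lam * q.2 k) * f q)) < ⊤ := by
  have hwpos : ∀ a, 0 < w a := fun a => lt_of_lt_of_le one_pos (hw a)
  set F : ℝ × (Fin p → ℝ) → ℝ :=
    fun q => f q ^ 2 * w q.1 * ∏ j, Real.exp (|q.2 j| / R) with hFdef
  have hF0 : ∀ q, 0 ≤ F q := fun q =>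
    mul_nonneg (mul_nonneg (sq_nonneg _) (hwpos q.1).le)
      (Finset.prod_nonneg fun j _ => (Real.exp_pos _).le)
  have hFm : Measurable F := by
    apply ((hfm.pow_const 2).mul (hwm.comp measurable_fst)).mul
    exact Finset.measurable_prod _ fun j _ =>
      (by fun_prop)
  -- the integrable weight 1/w
  have hum : Measurable fun a : ℝ => 1 / w a := measurable_const.div hwm
  have hu : Integrable fun a : ℝ => 1 / w a := by
    refine ⟨hum.aestronglyMeasurable, ?_⟩
    rw [hasFiniteIntegral_iff_ofReal (Filter.Eventually.of_forall fun a =>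
      one_div_nonneg.2 (hwpos a).le)]
    exact hwint
  have huval : ENNReal.ofReal (∫ a : ℝ, 1 / w a) = ∫⁻ a : ℝ, ENNReal.ofReal (1 / w a) :=
    ofReal_integral_eq_lintegral_ofReal hu
      (Filter.Eventually.of_forall fun a => one_div_nonneg.2 (hwpos a).le)
  have key : ∀ ε : ℝ, 0 < ε → ε < 1 → ∀ k : Fin p,
      (∫⁻ q : ℝ × (Fin p → ℝ),
          ENNReal.ofReal (Real.exp ((1 - ε) / (2 * R) * |q.2 k|) * f q)) ^ 2 ≤
        (∫⁻ q : ℝ × (Fin p → ℝ), ENNReal.ofReal (F q)) *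
          (∫⁻ a : ℝ, ENNReal.ofReal (1 / w a)) * ENNReal.ofReal ((2 * R / ε) ^ p) := by
    intro ε hε hε1 k
    set lam := (1 - ε) / (2 * R) with hlam
    set c : Fin p → ℝ := fun j => if j = k then ε / R else 1 / R with hc
    have hcpos : ∀ j, 0 < c j := by
      intro j; by_cases h : j = k <;> simp [hc, h] <;> positivity
    set G : ℝ × (Fin p → ℝ) → ℝ :=
      fun q => (1 / w q.1) * ∏ j, Real.exp (-(c j * |q.2 j|)) with hGdef
    have hG0 : ∀ q, 0 ≤ G q := fun q =>
      mul_nonneg (one_div_nonneg.2 (hwpos q.1).le)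
        (Finset.prod_nonneg fun j _ => (Real.exp_pos _).le)
    have hGm : Measurable G := by
      apply (hum.comp measurable_fst).mul
      exact Finset.measurable_prod _ fun j _ => by fun_prop
    -- the pointwise identity F * G = (exp(lam |b_k|) f)^2
    have hFG : ∀ q : ℝ × (Fin p → ℝ), F q * G q = (Real.exp (lam * |q.2 k|) * f q) ^ 2 := by
      intro q
      have h1 : ∏ j, Real.exp (|q.2 j| / R) = Real.exp (∑ j, |q.2 j| / R) :=
        (Real.exp_sum _ _).symm
      have h2 : ∏ j, Real.exp (-(c j * |q.2 j|)) = Real.exp (∑ j, -(c j * |q.2 j|)) :=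
        (Real.exp_sum _ _).symm
      have hsum : (∑ j, |q.2 j| / R) + ∑ j, -(c j * |q.2 j|) = 2 * lam * |q.2 k| := by
        rw [← Finset.sum_add_distrib]
        rw [Finset.sum_eq_single k]
        · simp only [hc, if_pos rfl, hlam]
          field_simp
          ring
        · intro j _ hj
          simp only [hc, if_neg hj]
          field_simp
          ring
        · intro h; exact absurd (Finset.mem_univ k) h
      have hwne : w q.1 ≠ 0 := (hwpos q.1).ne'
      simp only [hFdef, hGdef, h1, h2]
      rw [mul_pow, ← Real.exp_nat_mul]
      calc f q ^ 2 * w q.1 * Real.exp (∑ j, |q.2 j| / R) *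
            (1 / w q.1 * Real.exp (∑ j, -(c j * |q.2 j|)))
          = f q ^ 2 * (Real.exp (∑ j, |q.2 j| / R) * Real.exp (∑ j, -(c j * |q.2 j|))) *
            (w q.1 * (1 / w q.1)) := by ring
        _ = f q ^ 2 * Real.exp (2 * lam * |q.2 k|) := by
            rw [← Real.exp_add, hsum, mul_one_div_cancel hwne, mul_one]
        _ = Real.exp ((2:ℕ) * (lam * |q.2 k|)) * f q ^ 2 := by
            rw [mul_comm]
            congr 2
            push_cast
            ring
    -- Cauchy–Schwarz
    have h22 : (2:ℝ).HolderConjugate 2 := Real.HolderConjugate.two_two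
    set φ : ℝ × (Fin p → ℝ) → ℝ≥0∞ := fun q => ENNReal.ofReal (Real.sqrt (F q)) with hφdef
    set ψ : ℝ × (Fin p → ℝ) → ℝ≥0∞ := fun q => ENNReal.ofReal (Real.sqrt (G q)) with hψdef
    have hφm : Measurable φ := ENNReal.measurable_ofReal.comp hFm.sqrt
    have hψm : Measurable ψ := ENNReal.measurable_ofReal.comp hGm.sqrt
    have hCS := ENNReal.lintegral_mul_le_Lp_mul_Lq (volume : Measure (ℝ × (Fin p → ℝ)))
      h22 hφm.aemeasurable hψm.aemeasurable
    have hmul : ∀ q, (φ * ψ) q = ENNReal.ofReal (Real.exp (lam * |q.2 k|) * f q) := by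
      intro q
      show ENNReal.ofReal _ * ENNReal.ofReal _ = _
      rw [← ENNReal.ofReal_mul (Real.sqrt_nonneg _), ← Real.sqrt_mul (hF0 q), hFG q,
        Real.sqrt_sq (mul_nonneg (Real.exp_pos _).le (hf0 q))]
    have hφ2 : ∀ q, φ q ^ (2:ℝ) = ENNReal.ofReal (F q) := by
      intro q
      show ENNReal.ofReal _ ^ (2:ℝ) = _
      rw [ENNReal.ofReal_rpow_of_nonneg (Real.sqrt_nonneg _) (by norm_num)]
      congr 1
      rw [show ((2:ℝ)) = ((2:ℕ):ℝ) by norm_num, Real.rpow_natCast, Real.sq_sqrt (hF0 q)]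
    have hψ2 : ∀ q, ψ q ^ (2:ℝ) = ENNReal.ofReal (G q) := by
      intro q
      show ENNReal.ofReal _ ^ (2:ℝ) = _
      rw [ENNReal.ofReal_rpow_of_nonneg (Real.sqrt_nonneg _) (by norm_num)]
      congr 1
      rw [show ((2:ℝ)) = ((2:ℕ):ℝ) by norm_num, Real.rpow_natCast, Real.sq_sqrt (hG0 q)]
    rw [lintegral_congr hmul, lintegral_congr hφ2, lintegral_congr hψ2] at hCS
    -- compute the integral of G
    have hHint : Integrable (fun b : Fin p → ℝ => ∏ j, Real.exp (-(c j * |b j|))) :=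
      Integrable.fintype_prod (f := fun j b => Real.exp (-(c j * |b|)))
        (fun j => exp_abs_integrable (hcpos j))
    have hGint : Integrable G := by
      rw [show (volume : Measure (ℝ × (Fin p → ℝ))) = Measure.prod volume volume from
        Measure.volume_eq_prod _ _]
      exact hu.mul_prod hHint
    have hIG : (∫⁻ q : ℝ × (Fin p → ℝ), ENNReal.ofReal (G q)) = ENNReal.ofReal (∫ q, G q) :=
      (ofReal_integral_eq_lintegral_ofReal hGint
        (Filter.Eventually.of_forall hG0)).symm
    have hGval : (∫ q : ℝ × (Fin p → ℝ), G q) = (∫ a : ℝ, 1 / w a) * ∏ j, (2 / c j) := by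
      rw [show (volume : Measure (ℝ × (Fin p → ℝ))) = Measure.prod volume volume from
        Measure.volume_eq_prod _ _]
      rw [integral_prod_mul (fun a : ℝ => 1 / w a)
        (fun b : Fin p → ℝ => ∏ j, Real.exp (-(c j * |b j|)))]
      congr 1
      rw [integral_fintype_prod_volume_eq_prod (fun j (b : ℝ) => Real.exp (-(c j * |b|)))]
      exact Finset.prod_congr rfl fun j _ => exp_abs_integral (hcpos j)
    have hprodle : (∏ j, (2 / c j)) ≤ (2 * R / ε) ^ p := by
      calc (∏ j, (2 / c j)) ≤ ∏ _j : Fin p, (2 * R / ε) := by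
            refine Finset.prod_le_prod (fun j _ => by positivity) (fun j _ => ?_)
            rw [div_le_div_iff₀ (hcpos j) hε]
            by_cases h : j = k
            · simp only [hc, if_pos h]
              have he : 2 * R * (ε / R) = 2 * ε := by field_simp
              rw [he]
            · simp only [hc, if_neg h]
              have he : 2 * R * (1 / R) = 2 := by field_simp
              rw [he]
              linarith
        _ = (2 * R / ε) ^ p := by
            rw [Finset.prod_const, Finset.card_univ, Fintype.card_fin]
    have hIGle : (∫⁻ q : ℝ × (Fin p → ℝ), ENNReal.ofReal (G q)) ≤
        (∫⁻ a : ℝ, ENNReal.ofReal (1 / w a)) * ENNReal.ofReal ((2 * R / ε) ^ p) := by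
      rw [hIG, hGval, ENNReal.ofReal_mul (integral_nonneg fun a =>
        one_div_nonneg.2 (hwpos a).le), huval]
      exact mul_le_mul_right (ENNReal.ofReal_le_ofReal hprodle) _
    -- assemble
    calc (∫⁻ q : ℝ × (Fin p → ℝ),
            ENNReal.ofReal (Real.exp ((1 - ε) / (2 * R) * |q.2 k|) * f q)) ^ 2
        ≤ ((∫⁻ q, ENNReal.ofReal (F q)) ^ (1 / (2:ℝ)) *
            (∫⁻ q, ENNReal.ofReal (G q)) ^ (1 / (2:ℝ))) ^ 2 := by
          exact pow_le_pow_left' hCS 2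
      _ = (∫⁻ q, ENNReal.ofReal (F q)) * (∫⁻ q, ENNReal.ofReal (G q)) := by
          rw [mul_pow, ← ENNReal.rpow_natCast ((∫⁻ q, ENNReal.ofReal (F q)) ^ (1 / (2:ℝ))) 2,
            ← ENNReal.rpow_natCast ((∫⁻ q, ENNReal.ofReal (G q)) ^ (1 / (2:ℝ))) 2,
            ← ENNReal.rpow_mul, ← ENNReal.rpow_mul]
          norm_num
      _ ≤ (∫⁻ q, ENNReal.ofReal (F q)) *
            ((∫⁻ a : ℝ, ENNReal.ofReal (1 / w a)) * ENNReal.ofReal ((2 * R / ε) ^ p)) :=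
          mul_le_mul_right hIGle _
      _ = (∫⁻ q, ENNReal.ofReal (F q)) * (∫⁻ a : ℝ, ENNReal.ofReal (1 / w a)) *
            ENNReal.ofReal ((2 * R / ε) ^ p) := (mul_assoc _ _ _).symm
  refine ⟨key, ?_⟩
  intro k lam hlam0 hlam
  have hR2 : (0:ℝ) < 2 * R := by positivity
  have h2Rlam : 2 * R * lam < 1 := by
    rw [lt_div_iff₀ hR2] at hlam
    nlinarith
  have h2Rlam0 : 0 ≤ 2 * R * lam := by positivity
  set ε : ℝ := (1 - 2 * R * lam) / 2 with hεdef
  have hε0 : 0 < ε := by rw [hεdef]; linarith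
  have hε1 : ε < 1 := by rw [hεdef]; linarith
  have hkey := key ε hε0 hε1 k
  have hfin : (∫⁻ q : ℝ × (Fin p → ℝ), ENNReal.ofReal (F q)) *
      (∫⁻ a : ℝ, ENNReal.ofReal (1 / w a)) * ENNReal.ofReal ((2 * R / ε) ^ p) < ⊤ :=
    ENNReal.mul_lt_top (ENNReal.mul_lt_top hM hwint) ENNReal.ofReal_lt_top
  have hX2 := lt_of_le_of_lt hkey hfin
  have hX : (∫⁻ q : ℝ × (Fin p → ℝ),
      ENNReal.ofReal (Real.exp ((1 - ε) / (2 * R) * |q.2 k|) * f q)) < ⊤ := by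
    rw [lt_top_iff_ne_top]
    intro hX
    rw [hX] at hX2
    simp [ENNReal.top_pow] at hX2
  refine lt_of_le_of_lt (lintegral_mono fun q => ?_) hX
  apply ENNReal.ofReal_le_ofReal
  apply mul_le_mul_of_nonneg_right _ (hf0 q)
  apply Real.exp_le_exp.2
  have hlam' : lam ≤ (1 - ε) / (2 * R) := by
    rw [le_div_iff₀ hR2, hεdef]
    nlinarith
  calc lam * q.2 k ≤ lam * |q.2 k| := mul_le_mul_of_nonneg_left (le_abs_self _) hlam0
    _ ≤ (1 - ε) / (2 * R) * |q.2 k| := mul_le_mul_of_nonneg_right hlam' (abs_nonneg _)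
end

section
/- For every real c > 0 and every integer m ≥ 0, √π · c^m · (m!)² / ((2m)! · Γ(m + 3/2)) ≤ (√(2π) e^{3/2} / 3) · (e c / (4(m + 3/2)))^m, where Γ denotes the Gamma function. -/
open Real Filter

private lemma sqrtpi_le_stirlingSeq (n : ℕ) (hn : 1 ≤ n) : Real.sqrt π ≤ Stirling.stirlingSeq n := by
  obtain ⟨k, rfl⟩ := Nat.exists_eq_add_of_le hn
  have h := Stirling.stirlingSeq'_antitone.le_of_tendsto
    (Stirling.tendsto_stirlingSeq_sqrt_pi.comp (tendsto_add_atTop_nat 1)) k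
  simpa [Nat.add_comm] using h

private lemma stirlingSeq_le' (n : ℕ) : Stirling.stirlingSeq (n+1) ≤ Real.exp 1 / Real.sqrt 2 := by
  have h := Stirling.stirlingSeq'_antitone (Nat.zero_le n)
  simpa [Stirling.stirlingSeq_one] using h

private lemma le_factorial_stirling (n : ℕ) (hn : 1 ≤ n) :
    Real.sqrt π * (Real.sqrt (2*n) * ((n:ℝ)/Real.exp 1)^n) ≤ (Nat.factorial n : ℝ) := by
  have hpos : (0:ℝ) < Real.sqrt (2*n) * ((n:ℝ)/Real.exp 1)^n := by
    have : (0:ℝ) < n := by exact_mod_cast hn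
    positivity
  have h := sqrtpi_le_stirlingSeq n hn
  rw [Stirling.stirlingSeq, le_div_iff₀ hpos] at h
  linarith

private lemma factorial_le_stirling (n : ℕ) (hn : 1 ≤ n) :
    (Nat.factorial n : ℝ) ≤ Real.exp 1 * Real.sqrt n * ((n:ℝ)/Real.exp 1)^n := by
  obtain ⟨k, rfl⟩ := Nat.exists_eq_add_of_le' hn
  have hpos : (0:ℝ) < Real.sqrt (2*((k+1:ℕ):ℝ)) * (((k+1:ℕ):ℝ)/Real.exp 1)^(k+1) := by
    have : (0:ℝ) < ((k+1:ℕ):ℝ) := by positivity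
    positivity
  have h := stirlingSeq_le' k
  rw [Stirling.stirlingSeq, div_le_iff₀ hpos] at h
  calc (Nat.factorial (k+1) : ℝ)
      ≤ Real.exp 1 / Real.sqrt 2 * (Real.sqrt (2*((k+1:ℕ):ℝ)) * (((k+1:ℕ):ℝ)/Real.exp 1)^(k+1)) := h
   _ = Real.exp 1 * Real.sqrt ((k+1:ℕ):ℝ) * (((k+1:ℕ):ℝ)/Real.exp 1)^(k+1) := by
        rw [Real.sqrt_mul (by norm_num : (0:ℝ) ≤ 2)]
        rw [div_mul_eq_mul_div]
        field_simp

private lemma gamma_formula (m : ℕ) :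
    Real.Gamma ((m:ℝ) + 3/2) * (4^m * 2 * (Nat.factorial m : ℝ))
      = Real.sqrt π * (Nat.factorial (2*m+1) : ℝ) := by
  induction m with
  | zero =>
      have h32 : ((0:ℕ):ℝ) + 3/2 = 1/2 + 1 := by norm_num
      rw [h32, Real.Gamma_add_one (by norm_num), Real.Gamma_one_half_eq]
      norm_num [Nat.factorial]
      ring
  | succ n ih =>
      have h1 : ((n+1:ℕ):ℝ) + 3/2 = ((n:ℝ) + 3/2) + 1 := by push_cast; ring
      rw [h1, Real.Gamma_add_one (by positivity)]
      have h2 : 2*(n+1)+1 = (2*n+1)+1+1 := by ring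
      rw [h2, Nat.factorial_succ (2*n+1+1), Nat.factorial_succ (2*n+1), Nat.factorial_succ n]
      push_cast
      linear_combination (4*((n:ℝ)+1)*((n:ℝ)+3/2)) * ih

private lemma base_num (m : ℕ) (q : ℝ)
    (h : q^2*9*(4*((m:ℝ)+3/2))^(2*m) ≤ 2*π*(Real.exp 1)^(2*m+3)) :
    q ≤ Real.sqrt (2*π) * Real.exp (3/2)/3 * (Real.exp 1/(4*((m:ℝ)+3/2)))^m := by
  have hy : (0:ℝ) < 4*((m:ℝ)+3/2) := by positivity
  have hR : (0:ℝ) ≤ Real.sqrt (2*π) * Real.exp (3/2)/3 * (Real.exp 1/(4*((m:ℝ)+3/2)))^m := by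
    positivity
  refine le_of_pow_le_pow_left₀ two_ne_zero hR ?_
  have h1 : Real.sqrt (2*π)^2 = 2*π := Real.sq_sqrt (by positivity)
  have h2 : Real.exp (3/2)^2 = Real.exp 1^3 := by
    rw [sq, ← Real.exp_add, ← Real.exp_nat_mul]
    norm_num
  calc q^2 ≤ 2*π*(Real.exp 1)^(2*m+3)/(9*(4*((m:ℝ)+3/2))^(2*m)) := by
        rw [le_div_iff₀ (by positivity)]
        nlinarith [h]
   _ = (Real.sqrt (2*π) * Real.exp (3/2)/3 * (Real.exp 1/(4*((m:ℝ)+3/2)))^m)^2 := by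
        simp only [mul_pow, div_pow, h1, h2]
        have h6 : Real.exp (3:ℝ) * Real.exp (m:ℝ)^2 = Real.exp (3 + (m:ℝ)*2) := by
          rw [sq, ← Real.exp_add, ← Real.exp_add]; congr 1; ring
        field_simp
        ring_nf

private lemma numer_help (m : ℕ) (a : ℝ) (h : a ≤ 2*3.141592*2.7182818283^(2*m+3)) :
    a ≤ 2*π*(Real.exp 1)^(2*m+3) := by
  refine h.trans ?_
  have h1 : (3.141592:ℝ) ≤ π := Real.pi_gt_d6.le
  have h2 : (2.7182818283:ℝ) ≤ Real.exp 1 := Real.exp_one_gt_d9.le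
  gcongr <;> first
    | norm_num
    | linarith

set_option maxHeartbeats 2000000 in
private lemma key2 (m : ℕ) :
    2*4^m*((Nat.factorial m : ℝ))^3 / ((Nat.factorial (2*m) : ℝ) * (Nat.factorial (2*m+1) : ℝ))
      ≤ Real.sqrt (2*π) * Real.exp (3/2)/3 * (Real.exp 1/(4*((m:ℝ)+3/2)))^m := by
  rcases Nat.lt_or_ge m 3 with hm | hm
  · interval_cases m
    · refine le_trans (le_of_eq (by norm_num [Nat.factorial]))
        (base_num 0 2 (numer_help 0 _ (by norm_num)))
    · refine le_trans (le_of_eq (by norm_num [Nat.factorial]))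
        (base_num 1 (2/3) (numer_help 1 _ (by norm_num)))
    · refine le_trans (le_of_eq (by norm_num [Nat.factorial]))
        (base_num 2 (4/45) (numer_help 2 _ (by norm_num)))
  · -- general case, m ≥ 3
    have hmR : (3:ℝ) ≤ (m:ℝ) := by exact_mod_cast hm
    have hmpos : (0:ℝ) < (m:ℝ) := by linarith
    have he1 : (0:ℝ) < Real.exp 1 := Real.exp_pos 1
    have hy : (0:ℝ) < (m:ℝ)+3/2 := by positivity
    have hsm : Real.sqrt (m:ℝ)^2 = (m:ℝ) := Real.sq_sqrt hmpos.le
    have hsπ : Real.sqrt π^2 = π := Real.sq_sqrt pi_pos.le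
    have hs2 : Real.sqrt 2^2 = 2 := Real.sq_sqrt (by norm_num)
    have hsmpos : 0 < Real.sqrt (m:ℝ) := Real.sqrt_pos.mpr hmpos
    have hPpos : (0:ℝ) < ((m:ℝ)/Real.exp 1)^m := by positivity
    -- Stirling upper bound for m!
    have hup := factorial_le_stirling m (by omega)
    -- Stirling lower bound for (2m)!
    have hlo := le_factorial_stirling (2*m) (by omega)
    have hcast : ((2*m:ℕ):ℝ) = 2*(m:ℝ) := by push_cast; ring
    rw [hcast] at hlo
    have hs4m : Real.sqrt (2*(2*(m:ℝ))) = 2*Real.sqrt (m:ℝ) := by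
      rw [show 2*(2*(m:ℝ)) = 2^2*(m:ℝ) by ring, Real.sqrt_mul (by positivity),
        Real.sqrt_sq (by norm_num : (0:ℝ) ≤ 2)]
    have hQ : ((2*(m:ℝ))/Real.exp 1)^(2*m) = 4^m * (((m:ℝ)/Real.exp 1)^m)^2 := by
      rw [mul_comm 2 m, pow_mul, show (2*(m:ℝ))/Real.exp 1 = 2*((m:ℝ)/Real.exp 1) by ring,
        mul_pow, mul_pow, ← pow_mul, mul_comm m 2, pow_mul]
      norm_num
    rw [hs4m, hQ] at hlo
    -- exp bound : 1 ≤ exp(3/2) * U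
    have hEU : 1 ≤ Real.exp (3/2) * ((m:ℝ)/((m:ℝ)+3/2))^m := by
      have h1 : ((m:ℝ)+3/2)/(m:ℝ) = 1 + (3/2)/(m:ℝ) := by field_simp
      have h2 : 1 + (3/2)/(m:ℝ) ≤ Real.exp ((3/2)/(m:ℝ)) := by
        have := Real.add_one_le_exp ((3/2)/(m:ℝ)); linarith
      have hV : (((m:ℝ)+3/2)/(m:ℝ))^m ≤ Real.exp (3/2) := by
        calc (((m:ℝ)+3/2)/(m:ℝ))^m ≤ (Real.exp ((3/2)/(m:ℝ)))^m := by
              rw [h1]; exact pow_le_pow_left₀ (by positivity) h2 m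
         _ = Real.exp ((m:ℝ)*((3/2)/(m:ℝ))) := (Real.exp_nat_mul _ m).symm
         _ = Real.exp (3/2) := by rw [mul_div_cancel₀ _ hmpos.ne']
      have hUV : ((m:ℝ)/((m:ℝ)+3/2))^m * (((m:ℝ)+3/2)/(m:ℝ))^m = 1 := by
        rw [← mul_pow, show ((m:ℝ)/((m:ℝ)+3/2))*((((m:ℝ)+3/2))/(m:ℝ)) = 1 by
          field_simp; try ring, one_pow]
      calc (1:ℝ) = ((m:ℝ)/((m:ℝ)+3/2))^m * (((m:ℝ)+3/2)/(m:ℝ))^m := hUV.symm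
       _ ≤ ((m:ℝ)/((m:ℝ)+3/2))^m * Real.exp (3/2) := by
            apply mul_le_mul_of_nonneg_left hV (by positivity)
       _ = Real.exp (3/2) * ((m:ℝ)/((m:ℝ)+3/2))^m := by ring
    -- key numeric bound
    have hnum : 2*(Real.exp 1)^3*Real.sqrt (m:ℝ)
        ≤ 4*Real.sqrt π^2*(2*(m:ℝ)+1)/3*(Real.sqrt 2*Real.sqrt π) := by
      have key6 : 9*(Real.exp 1)^6*(m:ℝ) ≤ 8*π^3*(2*(m:ℝ)+1)^2 := by
        have hE6 : (Real.exp 1)^6 ≤ 2.7182818286^6 :=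
          pow_le_pow_left₀ (Real.exp_pos 1).le Real.exp_one_lt_d9.le 6
        have hπ3 : (3.141592:ℝ)^3 ≤ π^3 := pow_le_pow_left₀ (by norm_num) Real.pi_gt_d6.le 3
        have hmsq : 3*(m:ℝ) ≤ (m:ℝ)^2 := by nlinarith
        nlinarith [hE6, hπ3, hmsq, hmpos]
      refine le_of_pow_le_pow_left₀ two_ne_zero (by positivity) ?_
      calc (2*(Real.exp 1)^3*Real.sqrt (m:ℝ))^2 = 4*(Real.exp 1)^6*(Real.sqrt (m:ℝ)^2) := by ring
       _ = 4*(Real.exp 1)^6*(m:ℝ) := by rw [hsm]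
       _ ≤ 32/9*π^3*(2*(m:ℝ)+1)^2 := by nlinarith [key6]
       _ = 16/9*(Real.sqrt 2^2)*(Real.sqrt π^2)^3*(2*(m:ℝ)+1)^2 := by rw [hs2, hsπ]; ring
       _ = (4*Real.sqrt π^2*(2*(m:ℝ)+1)/3*(Real.sqrt 2*Real.sqrt π))^2 := by ring
    -- identity relating R, P, U
    have hR_id : (Real.exp 1/(4*((m:ℝ)+3/2)))^m * (((m:ℝ)/Real.exp 1)^m * 4^m)
        = ((m:ℝ)/((m:ℝ)+3/2))^m := by
      rw [← mul_pow, ← mul_pow]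
      congr 1
      field_simp
      try ring
    have hsplit : Real.sqrt (2*π) = Real.sqrt 2 * Real.sqrt π :=
      Real.sqrt_mul (by norm_num) π
    have h2m1 : ((Nat.factorial (2*m+1)):ℝ) = (2*(m:ℝ)+1)*((Nat.factorial (2*m)):ℝ) := by
      rw [Nat.factorial_succ]; push_cast; ring
    have hfacpos : (0:ℝ) < (Nat.factorial (2*m) : ℝ) * (Nat.factorial (2*m+1) : ℝ) := by
      have h1 := Nat.factorial_pos (2*m)
      have h2 := Nat.factorial_pos (2*m+1)
      positivity
    rw [div_le_iff₀ hfacpos]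
    calc 2*4^m*((Nat.factorial m : ℝ))^3
        ≤ 2*4^m*(Real.exp 1*Real.sqrt (m:ℝ)*((m:ℝ)/Real.exp 1)^m)^3 := by
          gcongr <;> first | exact hup | positivity
     _ ≤ (Real.sqrt (2*π) * Real.exp (3/2)/3 * (Real.exp 1/(4*((m:ℝ)+3/2)))^m) *
          ((Real.sqrt π*(2*Real.sqrt (m:ℝ))*(4^m*(((m:ℝ)/Real.exp 1)^m)^2)) *
            ((2*(m:ℝ)+1)*(Real.sqrt π*(2*Real.sqrt (m:ℝ))*(4^m*(((m:ℝ)/Real.exp 1)^m)^2)))) := by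
          rw [hsplit]
          calc 2*4^m*(Real.exp 1*Real.sqrt (m:ℝ)*((m:ℝ)/Real.exp 1)^m)^3
              = (2*(Real.exp 1)^3*Real.sqrt (m:ℝ)*(Real.sqrt (m:ℝ))^2)*(4^m*(((m:ℝ)/Real.exp 1)^m)^3) := by
                ring
           _ ≤ ((4*Real.sqrt π^2*(2*(m:ℝ)+1)/3*(Real.sqrt 2*Real.sqrt π))*(Real.sqrt (m:ℝ))^2*
                  (Real.exp (3/2) * ((m:ℝ)/((m:ℝ)+3/2))^m))*(4^m*(((m:ℝ)/Real.exp 1)^m)^3) := by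
                apply mul_le_mul_of_nonneg_right _ (by positivity)
                calc 2*(Real.exp 1)^3*Real.sqrt (m:ℝ)*(Real.sqrt (m:ℝ))^2
                    ≤ (4*Real.sqrt π^2*(2*(m:ℝ)+1)/3*(Real.sqrt 2*Real.sqrt π))*(Real.sqrt (m:ℝ))^2 := by
                      apply mul_le_mul_of_nonneg_right hnum (sq_nonneg _)
                 _ ≤ (4*Real.sqrt π^2*(2*(m:ℝ)+1)/3*(Real.sqrt 2*Real.sqrt π))*(Real.sqrt (m:ℝ))^2*
                      (Real.exp (3/2) * ((m:ℝ)/((m:ℝ)+3/2))^m) := by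
                      apply le_mul_of_one_le_right (by positivity) hEU
           _ = (Real.sqrt 2*Real.sqrt π * Real.exp (3/2)/3 * (Real.exp 1/(4*((m:ℝ)+3/2)))^m) *
                ((Real.sqrt π*(2*Real.sqrt (m:ℝ))*(4^m*(((m:ℝ)/Real.exp 1)^m)^2)) *
                  ((2*(m:ℝ)+1)*(Real.sqrt π*(2*Real.sqrt (m:ℝ))*(4^m*(((m:ℝ)/Real.exp 1)^m)^2)))) := by
                rw [← hR_id]
                ring
     _ ≤ (Real.sqrt (2*π) * Real.exp (3/2)/3 * (Real.exp 1/(4*((m:ℝ)+3/2)))^m) *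
          ((Nat.factorial (2*m) : ℝ) * (Nat.factorial (2*m+1) : ℝ)) := by
          rw [h2m1]
          have hlo' : Real.sqrt π*(2*Real.sqrt (m:ℝ))*(4^m*(((m:ℝ)/Real.exp 1)^m)^2)
              ≤ ((2*m).factorial : ℝ) := le_of_eq_of_le (by ring) hlo
          gcongr <;> first | exact hlo' | positivity

set_option maxHeartbeats 800000 in
/-- The quantitative inequality of Lemma B.6 of the paper: for every `c > 0` and `m ∈ ℕ`,
`√π c^m (m!)² / ((2m)! Γ(m + 3/2)) ≤ (√(2π) e^{3/2} / 3) (e c / (4(m + 3/2)))^m`. -/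
theorem gamma_factorial_singular_value_bound (c : ℝ) (hc : 0 < c) (m : ℕ) :
    Real.sqrt Real.pi * c ^ m * (Nat.factorial m : ℝ) ^ 2 /
        ((Nat.factorial (2 * m) : ℝ) * Real.Gamma ((m : ℝ) + 3 / 2)) ≤
      Real.sqrt (2 * Real.pi) * Real.exp (3 / 2) / 3 *
        (Real.exp 1 * c / (4 * ((m : ℝ) + 3 / 2))) ^ m := by
  have hΓ : Real.Gamma ((m:ℝ)+3/2) = Real.sqrt π * (Nat.factorial (2*m+1) : ℝ) /
      (4^m * 2 * (Nat.factorial m : ℝ)) := by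
    rw [eq_div_iff (by positivity)]
    exact gamma_formula m
  have hf1 : (Nat.factorial m : ℝ) ≠ 0 := by positivity
  have hf2 : (Nat.factorial (2*m) : ℝ) ≠ 0 := by positivity
  have hf3 : (Nat.factorial (2*m+1) : ℝ) ≠ 0 := by positivity
  have hsπ : Real.sqrt π ≠ 0 := by positivity
  have heq : Real.sqrt Real.pi * (Nat.factorial m : ℝ) ^ 2 /
      ((Nat.factorial (2 * m) : ℝ) * Real.Gamma ((m : ℝ) + 3 / 2))
      = 2*4^m*((Nat.factorial m : ℝ))^3 /
        ((Nat.factorial (2*m) : ℝ) * (Nat.factorial (2*m+1) : ℝ)) := by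
    rw [hΓ]
    field_simp
  have hkey := key2 m
  rw [← heq] at hkey
  have hcpow : (Real.exp 1 * c / (4 * ((m : ℝ) + 3 / 2))) ^ m
      = c^m * (Real.exp 1/(4*((m:ℝ)+3/2)))^m := by
    rw [← mul_pow]
    congr 1
    ring
  calc Real.sqrt Real.pi * c ^ m * (Nat.factorial m : ℝ) ^ 2 /
        ((Nat.factorial (2 * m) : ℝ) * Real.Gamma ((m : ℝ) + 3 / 2))
      = c^m * (Real.sqrt Real.pi * (Nat.factorial m : ℝ) ^ 2 /
        ((Nat.factorial (2 * m) : ℝ) * Real.Gamma ((m : ℝ) + 3 / 2))) := by ring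
   _ ≤ c^m * (Real.sqrt (2*π) * Real.exp (3/2)/3 * (Real.exp 1/(4*((m:ℝ)+3/2)))^m) := by
        apply mul_le_mul_of_nonneg_left hkey (by positivity)
   _ = Real.sqrt (2 * Real.pi) * Real.exp (3 / 2) / 3 *
        (Real.exp 1 * c / (4 * ((m : ℝ) + 3 / 2))) ^ m := by
        rw [hcpow]; ring
end

section
/- Let p ∈ ℕ, x₀ > 0, and f ∈ L¹(ℝ^{1+p};ℂ). For t ∈ ℝ, t ≠ 0, define the partial Fourier transform in the first variable 𝓕₁f(t,b) = ∫_ℝ e^{i t a} f(a,b) da for b ∈ ℝ^p, and assume 𝓕₁f(t,·) ∈ L²(ℝ^p). Then ∫_{[-1,1]^p} |𝓕[f](t, x₀ t u)|² du ≤ (2π/(x₀|t|))^p ∫_{ℝ^p} |𝓕₁f(t,b)|² db, where 𝓕[f](t,v) = ∫_{ℝ^{1+p}} e^{i(t a + v·b)} f(a,b) da db. -/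
open MeasureTheory Set
open scoped ENNReal

/-- The partial Fourier transform in the first variable:
`𝓕₁f(t,b) = ∫ e^{i t a} f(a,b) da`. -/
noncomputable def partialFourierFst (p : ℕ) (f : ℝ × (Fin p → ℝ) → ℂ) (t : ℝ)
    (b : Fin p → ℝ) : ℂ :=
  ∫ a : ℝ, Complex.exp (Complex.I * ((t * a : ℝ) : ℂ)) * f (a, b)


open MeasureTheory Set Complex
open scoped ENNReal Real

noncomputable section

namespace FCS

lemma norm_exp_I_mul_ofReal (r : ℝ) : ‖Complex.exp (Complex.I * (r : ℂ))‖ = 1 := by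
  simp [Complex.norm_exp]

lemma integrable_kernel_mul {α : Type*} [MeasureSpace α] {f : α → ℂ} (hfi : Integrable f)
    {φ : α → ℝ} (hφ : Measurable φ) :
    Integrable (fun q => Complex.exp (Complex.I * (φ q : ℂ)) * f q) :=
  hfi.bdd_mul (c := 1)
    ((Complex.measurable_exp.comp
      ((measurable_const.mul (Complex.measurable_ofReal.comp hφ)))).aestronglyMeasurable)
    (Filter.Eventually.of_forall fun x => le_of_eq (norm_exp_I_mul_ofReal _))

variable {p : ℕ} {f : ℝ × (Fin p → ℝ) → ℂ} {t : ℝ}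

lemma integrable_pF (hfi : Integrable f) : Integrable (partialFourierFst p f t) := by
  have h1 : Integrable (fun q : ℝ × (Fin p → ℝ) =>
      Complex.exp (Complex.I * ((t * q.1 : ℝ) : ℂ)) * f q) :=
    integrable_kernel_mul hfi (by fun_prop)
  rw [Measure.volume_eq_prod] at h1
  exact h1.integral_prod_right

lemma pF_norm_le (hfi : Integrable f) (b : Fin p → ℝ) :
    ‖partialFourierFst p f t b‖ ≤ ∫ a : ℝ, ‖f (a, b)‖ := by
  refine (norm_integral_le_integral_norm _).trans_eq ?_
  congr 1
  ext a
  rw [norm_mul, norm_exp_I_mul_ofReal, one_mul]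

lemma g_repr (hfi : Integrable f) (v : Fin p → ℝ) :
    paperFourier p f t v =
      ∫ b : Fin p → ℝ, Complex.exp (Complex.I * ((∑ j, v j * b j : ℝ) : ℂ)) *
        partialFourierFst p f t b := by
  have hint : Integrable (fun q : ℝ × (Fin p → ℝ) =>
      Complex.exp (Complex.I * ((t * q.1 + ∑ j, v j * q.2 j : ℝ) : ℂ)) * f q) :=
    integrable_kernel_mul hfi (by fun_prop)
  rw [paperFourier, Measure.volume_eq_prod ℝ (Fin p → ℝ)]
  rw [Measure.volume_eq_prod ℝ (Fin p → ℝ)] at hint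
  rw [integral_prod_symm _ hint]
  refine integral_congr_ae (Filter.Eventually.of_forall fun b => ?_)
  show _ = _ * partialFourierFst p f t b
  rw [show partialFourierFst p f t b = ∫ a : ℝ, Complex.exp (Complex.I * ((t * a : ℝ) : ℂ)) * f (a, b) from rfl, ← integral_const_mul]
  refine integral_congr_ae (Filter.Eventually.of_forall fun a => ?_)
  show Complex.exp (Complex.I * ((t * a + ∑ j, v j * b j : ℝ) : ℂ)) * f (a, b) = _
  have e : (Complex.I * ((t * a + ∑ j, v j * b j : ℝ) : ℂ)) =
      Complex.I * ((∑ j, v j * b j : ℝ) : ℂ) + Complex.I * ((t * a : ℝ) : ℂ) := by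
    push_cast; ring
  rw [e, Complex.exp_add, mul_assoc]


section Gauss

variable {ε : ℝ}

lemma K_eq (hε : 0 < ε) (s : ℝ) :
    ∫ x : ℝ, Complex.exp (Complex.I * ((x * s : ℝ) : ℂ)) *
        (((Real.exp (-ε * x ^ 2) : ℝ)) : ℂ)
      = ((Real.sqrt (π / ε) * Real.exp (-(1 / (4 * ε)) * s ^ 2) : ℝ) : ℂ) := by
  have h := fourierIntegral_gaussian (b := (ε : ℂ)) (by simpa using hε) (s : ℂ)
  have e1 : (fun x : ℝ => Complex.exp (Complex.I * ((x * s : ℝ) : ℂ)) *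
      (((Real.exp (-ε * x ^ 2) : ℝ)) : ℂ))
      = fun x : ℝ => Complex.exp (Complex.I * (s : ℂ) * (x : ℂ)) *
        Complex.exp (-(ε : ℂ) * (x : ℂ) ^ 2) := by
    funext x
    rw [Complex.ofReal_exp]
    push_cast
    ring_nf
  rw [e1, h]
  have e2 : ((π : ℂ) / (ε : ℂ)) ^ (1 / 2 : ℂ) = ((Real.sqrt (π / ε) : ℝ) : ℂ) := by
    rw [Real.sqrt_eq_rpow, Complex.ofReal_cpow (by positivity)]
    push_cast
    norm_num
  have e3 : Complex.exp (-(s : ℂ) ^ 2 / (4 * (ε : ℂ))) =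
      ((Real.exp (-(1 / (4 * ε)) * s ^ 2) : ℝ) : ℂ) := by
    rw [Complex.ofReal_exp]
    congr 1
    push_cast
    field_simp
  rw [e2, e3]
  norm_cast

variable {p : ℕ}

/-- The `p`-dimensional Gaussian kernel. -/
def Gp (ε : ℝ) (d : Fin p → ℝ) : ℝ :=
  ∏ j, (Real.sqrt (π / ε) * Real.exp (-(1 / (4 * ε)) * d j ^ 2))

lemma Gp_nonneg (hε : 0 < ε) (d : Fin p → ℝ) : 0 ≤ Gp ε d := by
  refine Finset.prod_nonneg fun j _ => by positivity

lemma w_eq_prod (v : Fin p → ℝ) :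
    Real.exp (-ε * ∑ j, v j ^ 2) = ∏ j, Real.exp (-ε * v j ^ 2) := by
  rw [← Real.exp_sum, Finset.mul_sum]

lemma w_integrable (hε : 0 < ε) :
    Integrable (fun v : Fin p → ℝ => Real.exp (-ε * ∑ j, v j ^ 2)) := by
  simp only [w_eq_prod]
  exact Integrable.fintype_prod fun _ => integrable_exp_neg_mul_sq hε

lemma Gp_integrable (hε : 0 < ε) : Integrable (Gp ε : (Fin p → ℝ) → ℝ) := by
  exact Integrable.fintype_prod fun _ =>
    (integrable_exp_neg_mul_sq (by positivity)).const_mul _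

lemma integral_G (hε : 0 < ε) :
    ∫ x : ℝ, Real.sqrt (π / ε) * Real.exp (-(1 / (4 * ε)) * x ^ 2) = 2 * π := by
  rw [integral_const_mul, integral_gaussian, ← Real.sqrt_mul (by positivity)]
  have e : π / ε * (π / (1 / (4 * ε))) = (2 * π) ^ 2 := by
    field_simp
    ring
  rw [e, Real.sqrt_sq (by positivity)]

lemma Gp_integral (hε : 0 < ε) :
    ∫ d : Fin p → ℝ, Gp ε d = (2 * π) ^ p := by
  have key := MeasureTheory.integral_fintype_prod_eq_prod (ι := Fin p) (μ := fun _ => volume)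
    (f := fun _ (x : ℝ) => Real.sqrt (π / ε) * Real.exp (-(1 / (4 * ε)) * x ^ 2))
  simp only [Gp]
  exact key.trans (by rw [integral_G hε, Finset.prod_const, Finset.card_univ, Fintype.card_fin])

lemma FT_w (hε : 0 < ε) (d : Fin p → ℝ) :
    ∫ v : Fin p → ℝ, Complex.exp (Complex.I * ((∑ j, v j * d j : ℝ) : ℂ)) *
        ((Real.exp (-ε * ∑ j, v j ^ 2) : ℝ) : ℂ)
      = ((Gp ε d : ℝ) : ℂ) := by
  have e1 : (fun v : Fin p → ℝ => Complex.exp (Complex.I * ((∑ j, v j * d j : ℝ) : ℂ)) *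
      ((Real.exp (-ε * ∑ j, v j ^ 2) : ℝ) : ℂ))
      = fun v : Fin p → ℝ => ∏ j, (Complex.exp (Complex.I * ((v j * d j : ℝ) : ℂ)) *
          ((Real.exp (-ε * v j ^ 2) : ℝ) : ℂ)) := by
    funext v
    rw [Finset.prod_mul_distrib]
    congr 1
    · rw [← Complex.exp_sum]
      congr 1
      push_cast
      rw [Finset.mul_sum]
    · rw [w_eq_prod]
      norm_cast
  have key := MeasureTheory.integral_fintype_prod_eq_prod (ι := Fin p) (μ := fun _ => volume)
    (f := fun j (x : ℝ) => Complex.exp (Complex.I * ((x * d j : ℝ) : ℂ)) *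
      ((Real.exp (-ε * x ^ 2) : ℝ) : ℂ))
  calc ∫ v : Fin p → ℝ, Complex.exp (Complex.I * ((∑ j, v j * d j : ℝ) : ℂ)) *
        ((Real.exp (-ε * ∑ j, v j ^ 2) : ℝ) : ℂ)
      = ∫ v : Fin p → ℝ, ∏ j, (Complex.exp (Complex.I * ((v j * d j : ℝ) : ℂ)) *
          ((Real.exp (-ε * v j ^ 2) : ℝ) : ℂ)) := by rw [e1]
    _ = ∏ j, ∫ x : ℝ, Complex.exp (Complex.I * ((x * d j : ℝ) : ℂ)) *
          ((Real.exp (-ε * x ^ 2) : ℝ) : ℂ) := key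
    _ = ∏ j, ((Real.sqrt (π / ε) * Real.exp (-(1 / (4 * ε)) * d j ^ 2) : ℝ) : ℂ) :=
        Finset.prod_congr rfl fun j _ => K_eq hε (d j)
    _ = ((Gp ε d : ℝ) : ℂ) := by rw [Gp]; norm_cast

end Gauss

section Core

variable {p : ℕ} {f : ℝ × (Fin p → ℝ) → ℂ} {t : ℝ} {ε : ℝ}

lemma Gp_neg (d : Fin p → ℝ) : Gp ε (-d) = Gp ε d := by
  unfold Gp
  refine Finset.prod_congr rfl fun j _ => by rw [Pi.neg_apply, neg_sq]

lemma g_aesm (hfi : Integrable f) :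
    AEStronglyMeasurable (paperFourier p f t) (volume : Measure (Fin p → ℝ)) := by
  have hh : Integrable (partialFourierFst p f t) := integrable_pF hfi
  have e : paperFourier p f t = fun v =>
      ∫ b : Fin p → ℝ, Complex.exp (Complex.I * ((∑ j, v j * b j : ℝ) : ℂ)) *
        partialFourierFst p f t b := funext (g_repr hfi)
  rw [e]
  exact AEStronglyMeasurable.integral_prod_right'
    (f := fun z : (Fin p → ℝ) × (Fin p → ℝ) =>
      Complex.exp (Complex.I * ((∑ j, z.1 j * z.2 j : ℝ) : ℂ)) * partialFourierFst p f t z.2)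
    ((Continuous.aestronglyMeasurable (by fun_prop)).mul hh.aestronglyMeasurable.comp_snd)

lemma g_norm_le (hfi : Integrable f) (v : Fin p → ℝ) :
    ‖paperFourier p f t v‖ ≤ ∫ b : Fin p → ℝ, ‖partialFourierFst p f t b‖ := by
  rw [g_repr hfi v]
  refine (norm_integral_le_integral_norm _).trans_eq ?_
  congr 1
  ext b
  rw [norm_mul, norm_exp_I_mul_ofReal, one_mul]

/-- The core Gaussian-regularized Plancherel inequality. -/
lemma core (hfi : Integrable f) (hε : 0 < ε)
    (hL2 : (∫⁻ b : Fin p → ℝ, (‖partialFourierFst p f t b‖₊ : ℝ≥0∞) ^ 2) < ⊤) :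
    ∫ v : Fin p → ℝ, ‖paperFourier p f t v‖ ^ 2 * Real.exp (-ε * ∑ j, v j ^ 2)
      ≤ (2 * π) ^ p * ∫ b : Fin p → ℝ, ‖partialFourierFst p f t b‖ ^ 2 := by
  set h : (Fin p → ℝ) → ℂ := partialFourierFst p f t with h_def
  set g : (Fin p → ℝ) → ℂ := paperFourier p f t with g_def
  set w : (Fin p → ℝ) → ℝ := fun v => Real.exp (-ε * ∑ j, v j ^ 2) with w_def
  have hh : Integrable h := integrable_pF hfi
  have hhm := hh.aestronglyMeasurable
  -- ψ := ‖h ·‖² is integrable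
  have hψm : AEStronglyMeasurable (fun b : Fin p → ℝ => ‖h b‖ ^ 2) volume := by
    simpa [pow_two, Pi.mul_def] using hhm.norm.mul hhm.norm
  have hψ : Integrable (fun b : Fin p → ℝ => ‖h b‖ ^ 2) := by
    refine ⟨hψm, ?_⟩
    rw [hasFiniteIntegral_def]
    simpa only [nnnorm_pow, nnnorm_norm, ENNReal.coe_pow, enorm_eq_nnnorm] using hL2
  -- the kernel
  set Ker : (Fin p → ℝ) → (Fin p → ℝ) → ℂ :=
    fun v b => Complex.exp (Complex.I * ((∑ j, v j * b j : ℝ) : ℂ)) with Ker_def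
  have hKer_norm : ∀ v b, ‖Ker v b‖ = 1 := fun v b => norm_exp_I_mul_ofReal _
  set Ψ : (Fin p → ℝ) → (Fin p → ℝ) × (Fin p → ℝ) → ℂ :=
    fun v z => (Ker v z.1 * h z.1) * (starRingEnd ℂ) (Ker v z.2 * h z.2) * ((w v : ℝ) : ℂ)
    with Ψ_def
  -- step 1 & 2: ↑T = ∫ v ∫ z Ψ
  have step12 : ((∫ v, ‖g v‖ ^ 2 * w v : ℝ) : ℂ)
      = ∫ v, ∫ z : (Fin p → ℝ) × (Fin p → ℝ), Ψ v z := by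
    have e0 : ((∫ v, ‖g v‖ ^ 2 * w v : ℝ) : ℂ) = ∫ v, ((‖g v‖ ^ 2 * w v : ℝ) : ℂ) :=
      (integral_ofReal (𝕜 := ℂ)).symm
    rw [e0]
    refine integral_congr_ae (Filter.Eventually.of_forall fun v => ?_)
    have e1 : ((‖g v‖ ^ 2 * w v : ℝ) : ℂ) = (g v * (starRingEnd ℂ) (g v)) * ((w v : ℝ) : ℂ) := by
      rw [Complex.mul_conj, Complex.normSq_eq_norm_sq]
      push_cast
      ring
    show ((‖g v‖ ^ 2 * w v : ℝ) : ℂ) = ∫ z : (Fin p → ℝ) × (Fin p → ℝ), Ψ v z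
    rw [e1, g_def, g_repr hfi v, ← integral_conj, ← integral_prod_mul, ← Measure.volume_eq_prod, ← integral_mul_const]
  -- step 3: integrability of the double integrand, and swap
  have hΨint : Integrable (Function.uncurry Ψ)
      ((volume : Measure (Fin p → ℝ)).prod
        ((volume : Measure (Fin p → ℝ)).prod (volume : Measure (Fin p → ℝ)))) := by
    have hdom : Integrable (fun y : (Fin p → ℝ) × ((Fin p → ℝ) × (Fin p → ℝ)) =>
        w y.1 * (‖h y.2.1‖ * ‖h y.2.2‖))
        ((volume : Measure (Fin p → ℝ)).prod
          ((volume : Measure (Fin p → ℝ)).prod (volume : Measure (Fin p → ℝ)))) := by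
      rw [← Measure.volume_eq_prod] at *
      exact (w_integrable hε).mul_prod (hh.norm.mul_prod hh.norm)
    refine hdom.mono' ?_ ?_
    · apply AEStronglyMeasurable.mul
      apply AEStronglyMeasurable.mul
      · exact (Continuous.aestronglyMeasurable (by fun_prop)).mul hhm.comp_fst.comp_snd
      · exact Continuous.comp_aestronglyMeasurable continuous_star
          ((Continuous.aestronglyMeasurable (by fun_prop)).mul hhm.comp_snd.comp_snd)
      · exact Continuous.aestronglyMeasurable (by fun_prop)
    · refine Filter.Eventually.of_forall fun y => le_of_eq ?_
      show ‖Ψ y.1 y.2‖ = _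
      rw [Ψ_def]
      simp only [norm_mul, RCLike.norm_conj, hKer_norm, one_mul, Complex.norm_real,
        Real.norm_eq_abs, _root_.abs_of_nonneg (Real.exp_nonneg _ : (0:ℝ) ≤ w y.1)]
      rw [_root_.abs_of_nonneg (show (0:ℝ) ≤ w y.1 from Real.exp_nonneg _)]
      ring
  have step3 : (∫ v, ∫ z : (Fin p → ℝ) × (Fin p → ℝ), Ψ v z)
      = ∫ z : (Fin p → ℝ) × (Fin p → ℝ), ∫ v, Ψ v z := by
    rw [Measure.volume_eq_prod]
    exact integral_integral_swap hΨint
  -- step 4: inner integral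
  have step4 : ∀ z : (Fin p → ℝ) × (Fin p → ℝ), (∫ v, Ψ v z)
      = (h z.1 * (starRingEnd ℂ) (h z.2)) * ((Gp ε (z.1 - z.2) : ℝ) : ℂ) := by
    intro z
    have e2 : ∀ v, Ψ v z = (h z.1 * (starRingEnd ℂ) (h z.2)) *
        (Complex.exp (Complex.I * ((∑ j, v j * (z.1 - z.2) j : ℝ) : ℂ)) * ((w v : ℝ) : ℂ)) := by
      intro v
      rw [Ψ_def]
      simp only [map_mul]
      have e3 : Ker v z.1 * (starRingEnd ℂ) (Ker v z.2)
          = Complex.exp (Complex.I * ((∑ j, v j * (z.1 - z.2) j : ℝ) : ℂ)) := by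
        rw [Ker_def]
        simp only [← Complex.exp_conj, map_mul, Complex.conj_I, Complex.conj_ofReal]
        rw [← Complex.exp_add]
        congr 1
        have : ∀ j, v j * (z.1 - z.2) j = v j * z.1 j - v j * z.2 j := fun j => by
          rw [Pi.sub_apply]; ring
        simp only [this, Finset.sum_sub_distrib]
        push_cast
        ring
      rw [← e3]
      ring
    simp only [e2]
    rw [integral_const_mul, FT_w hε]
  -- assemble the complex identity
  have key : ((∫ v, ‖g v‖ ^ 2 * w v : ℝ) : ℂ)
      = ∫ z : (Fin p → ℝ) × (Fin p → ℝ),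
          (h z.1 * (starRingEnd ℂ) (h z.2)) * ((Gp ε (z.1 - z.2) : ℝ) : ℂ) := by
    rw [step12, step3]
    exact integral_congr_ae (Filter.Eventually.of_forall step4)
  -- integrability of the comparison functions
  have base : Integrable (fun y : (Fin p → ℝ) × (Fin p → ℝ) => ‖h y.1‖ ^ 2 * Gp ε y.2)
      ((volume : Measure (Fin p → ℝ)).prod (volume : Measure (Fin p → ℝ))) :=
    hψ.mul_prod (Gp_integrable hε)
  have I2 : Integrable (fun z : (Fin p → ℝ) × (Fin p → ℝ) => ‖h z.2‖ ^ 2 * Gp ε (z.1 - z.2))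
      ((volume : Measure (Fin p → ℝ)).prod (volume : Measure (Fin p → ℝ))) := by
    exact ((measurePreserving_prod_sub_swap (volume : Measure (Fin p → ℝ))
      volume).integrable_comp base.aestronglyMeasurable).mpr base
  have I1 : Integrable (fun z : (Fin p → ℝ) × (Fin p → ℝ) => ‖h z.1‖ ^ 2 * Gp ε (z.1 - z.2))
      ((volume : Measure (Fin p → ℝ)).prod (volume : Measure (Fin p → ℝ))) := by
    have I1' : Integrable ((fun y : (Fin p → ℝ) × (Fin p → ℝ) => ‖h y.1‖ ^ 2 * Gp ε y.2)
        ∘ (fun z : (Fin p → ℝ) × (Fin p → ℝ) => (z.1, z.2 - z.1)))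
        ((volume : Measure (Fin p → ℝ)).prod volume) :=
      ((measurePreserving_prod_sub (volume : Measure (Fin p → ℝ))
        volume).integrable_comp base.aestronglyMeasurable).mpr base
    have : (fun z : (Fin p → ℝ) × (Fin p → ℝ) => ‖h z.1‖ ^ 2 * Gp ε (z.1 - z.2))
        = (fun y : (Fin p → ℝ) × (Fin p → ℝ) => ‖h y.1‖ ^ 2 * Gp ε y.2)
          ∘ (fun z => (z.1, z.2 - z.1)) := by
      funext z
      show _ = ‖h z.1‖ ^ 2 * Gp ε (z.2 - z.1)
      rw [← neg_sub z.1 z.2, Gp_neg]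
    rw [this]
    exact I1'
  -- the final comparison
  have Tnn : (0 : ℝ) ≤ ∫ v, ‖g v‖ ^ 2 * w v :=
    integral_nonneg fun v => by positivity
  have normT : (∫ v, ‖g v‖ ^ 2 * w v) = ‖((∫ v, ‖g v‖ ^ 2 * w v : ℝ) : ℂ)‖ := by
    rw [Complex.norm_real, Real.norm_eq_abs, _root_.abs_of_nonneg Tnn]
  rw [normT, key]
  calc ‖∫ z : (Fin p → ℝ) × (Fin p → ℝ),
          (h z.1 * (starRingEnd ℂ) (h z.2)) * ((Gp ε (z.1 - z.2) : ℝ) : ℂ)‖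
      ≤ ∫ z : (Fin p → ℝ) × (Fin p → ℝ),
          ‖(h z.1 * (starRingEnd ℂ) (h z.2)) * ((Gp ε (z.1 - z.2) : ℝ) : ℂ)‖ :=
        norm_integral_le_integral_norm _
    _ ≤ ∫ z : (Fin p → ℝ) × (Fin p → ℝ),
          (‖h z.1‖ ^ 2 * Gp ε (z.1 - z.2) + ‖h z.2‖ ^ 2 * Gp ε (z.1 - z.2)) / 2 := by
        refine integral_mono_of_nonneg (Filter.Eventually.of_forall fun z => norm_nonneg _)
          (by rw [Measure.volume_eq_prod]; exact (I1.add I2).div_const 2)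
          (Filter.Eventually.of_forall fun z => ?_)
        have hG := Gp_nonneg hε (z.1 - z.2)
        have hn1 : (0:ℝ) ≤ ‖h z.1‖ := norm_nonneg _
        have hn2 : (0:ℝ) ≤ ‖h z.2‖ := norm_nonneg _
        have e4 : ‖(h z.1 * (starRingEnd ℂ) (h z.2)) * ((Gp ε (z.1 - z.2) : ℝ) : ℂ)‖
            = ‖h z.1‖ * ‖h z.2‖ * Gp ε (z.1 - z.2) := by
          simp only [norm_mul, RCLike.norm_conj, Complex.norm_real, Real.norm_eq_abs,
            _root_.abs_of_nonneg hG]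
        show ‖(h z.1 * (starRingEnd ℂ) (h z.2)) * ((Gp ε (z.1 - z.2) : ℝ) : ℂ)‖ ≤ _
        rw [e4]
        show _ ≤ (‖h z.1‖ ^ 2 * Gp ε (z.1 - z.2) + ‖h z.2‖ ^ 2 * Gp ε (z.1 - z.2)) / 2
        nlinarith [sq_nonneg (‖h z.1‖ - ‖h z.2‖), mul_nonneg (mul_nonneg hn1 hn2) hG]
    _ = (2 * π) ^ p * ∫ b, ‖h b‖ ^ 2 := by
        rw [Measure.volume_eq_prod, integral_div, integral_add I1 I2]
        have c1 : ∫ z : (Fin p → ℝ) × (Fin p → ℝ), ‖h z.1‖ ^ 2 * Gp ε (z.1 - z.2)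
            ∂((volume : Measure (Fin p → ℝ)).prod volume)
            = (2 * π) ^ p * ∫ b, ‖h b‖ ^ 2 := by
          rw [integral_prod _ I1]
          have : ∀ b : Fin p → ℝ, (∫ b' : Fin p → ℝ, ‖h b‖ ^ 2 * Gp ε (b - b'))
              = ‖h b‖ ^ 2 * (2 * π) ^ p := by
            intro b
            rw [integral_const_mul]
            congr 1
            rw [← Gp_integral (p := p) hε]
            exact integral_sub_left_eq_self (Gp ε) volume b
          simp only [this]
          rw [integral_mul_const]
          ring
        have c2 : ∫ z : (Fin p → ℝ) × (Fin p → ℝ), ‖h z.2‖ ^ 2 * Gp ε (z.1 - z.2)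
            ∂((volume : Measure (Fin p → ℝ)).prod volume)
            = (2 * π) ^ p * ∫ b, ‖h b‖ ^ 2 := by
          rw [integral_prod_symm _ I2]
          have : ∀ b' : Fin p → ℝ, (∫ b : Fin p → ℝ, ‖h b'‖ ^ 2 * Gp ε (b - b'))
              = ‖h b'‖ ^ 2 * (2 * π) ^ p := by
            intro b'
            rw [integral_const_mul]
            congr 1
            rw [← Gp_integral (p := p) hε]
            exact integral_sub_right_eq_self (Gp ε) b'
          simp only [this]
          rw [integral_mul_const]
          ring
        rw [c1, c2]
        ring

lemma phi_integrable (hfi : Integrable f) (hε : 0 < ε) :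
    Integrable (fun v : Fin p → ℝ =>
      ‖paperFourier p f t v‖ ^ 2 * Real.exp (-ε * ∑ j, v j ^ 2)) := by
  set C : ℝ := ∫ b : Fin p → ℝ, ‖partialFourierFst p f t b‖ with C_def
  have hC : 0 ≤ C := integral_nonneg fun b => norm_nonneg _
  refine Integrable.mono' ((w_integrable hε).const_mul (C ^ 2)) ?_ ?_
  · exact (by simpa [pow_two, Pi.mul_def] using (g_aesm hfi).norm.mul (g_aesm hfi).norm :
        AEStronglyMeasurable (fun v => ‖paperFourier p f t v‖ ^ 2) volume).mul
      (Continuous.aestronglyMeasurable (by fun_prop))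
  · refine Filter.Eventually.of_forall fun v => ?_
    have h1 : (0:ℝ) ≤ Real.exp (-ε * ∑ j, v j ^ 2) := Real.exp_nonneg _
    rw [Real.norm_eq_abs, _root_.abs_of_nonneg (by positivity)]
    exact mul_le_mul_of_nonneg_right
      (pow_le_pow_left₀ (norm_nonneg _) (g_norm_le hfi v) 2) h1

lemma key_ennreal (hfi : Integrable f) (hε : 0 < ε)
    (hL2 : (∫⁻ b : Fin p → ℝ, (‖partialFourierFst p f t b‖₊ : ℝ≥0∞) ^ 2) < ⊤) :
    (∫⁻ v : Fin p → ℝ, (‖paperFourier p f t v‖₊ : ℝ≥0∞) ^ 2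
        * ENNReal.ofReal (Real.exp (-ε * ∑ j, v j ^ 2)))
      ≤ ENNReal.ofReal ((2 * π) ^ p) *
          ∫⁻ b : Fin p → ℝ, (‖partialFourierFst p f t b‖₊ : ℝ≥0∞) ^ 2 := by
  set h : (Fin p → ℝ) → ℂ := partialFourierFst p f t with h_def
  have hh : Integrable h := integrable_pF hfi
  have hψm : AEStronglyMeasurable (fun b : Fin p → ℝ => ‖h b‖ ^ 2) volume := by
    simpa [pow_two, Pi.mul_def] using hh.aestronglyMeasurable.norm.mul hh.aestronglyMeasurable.norm
  have hψ : Integrable (fun b : Fin p → ℝ => ‖h b‖ ^ 2) := by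
    refine ⟨hψm, ?_⟩
    rw [hasFiniteIntegral_def]
    simpa only [nnnorm_pow, nnnorm_norm, ENNReal.coe_pow, enorm_eq_nnnorm] using hL2
  have e1 : (∫⁻ v : Fin p → ℝ, (‖paperFourier p f t v‖₊ : ℝ≥0∞) ^ 2
        * ENNReal.ofReal (Real.exp (-ε * ∑ j, v j ^ 2)))
      = ENNReal.ofReal (∫ v : Fin p → ℝ,
          ‖paperFourier p f t v‖ ^ 2 * Real.exp (-ε * ∑ j, v j ^ 2)) := by
    rw [MeasureTheory.ofReal_integral_eq_lintegral_ofReal (phi_integrable hfi hε)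
      (Filter.Eventually.of_forall fun v => by positivity)]
    refine lintegral_congr fun v => ?_
    rw [ENNReal.ofReal_mul (by positivity), ENNReal.ofReal_pow (norm_nonneg _),
      ofReal_norm_eq_enorm, enorm_eq_nnnorm]
  have e2 : (∫⁻ b : Fin p → ℝ, (‖h b‖₊ : ℝ≥0∞) ^ 2)
      = ENNReal.ofReal (∫ b : Fin p → ℝ, ‖h b‖ ^ 2) := by
    rw [MeasureTheory.ofReal_integral_eq_lintegral_ofReal hψ
      (Filter.Eventually.of_forall fun b => by positivity)]
    refine lintegral_congr fun b => ?_
    rw [ENNReal.ofReal_pow (norm_nonneg _), ofReal_norm_eq_enorm, enorm_eq_nnnorm]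
  rw [e1, e2, ← ENNReal.ofReal_mul (by positivity)]
  exact ENNReal.ofReal_le_ofReal (core hfi hε hL2)

end Core

end FCS


/-- The key change-of-variables/Plancherel bound (eq. P3 of the paper):
`∫_{[-1,1]^p} |𝓕[f](t, x₀ t u)|² du ≤ (2π/(x₀|t|))^p ∫_{ℝ^p} |𝓕₁f(t,b)|² db`. -/
theorem fourier_cone_slice_bound
    (p : ℕ) (x₀ t : ℝ) (hx₀ : 0 < x₀) (ht : t ≠ 0)
    (f : ℝ × (Fin p → ℝ) → ℂ) (hfi : Integrable f volume)
    (hL2 : (∫⁻ b : Fin p → ℝ, (‖partialFourierFst p f t b‖₊ : ℝ≥0∞) ^ 2) < ⊤) :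
    (∫⁻ u in Set.pi Set.univ (fun _ : Fin p => Set.Icc (-1 : ℝ) 1),
        (‖paperFourier p f t ((x₀ * t) • u)‖₊ : ℝ≥0∞) ^ 2) ≤
      ENNReal.ofReal ((2 * Real.pi / (x₀ * |t|)) ^ p) *
        ∫⁻ b : Fin p → ℝ, (‖partialFourierFst p f t b‖₊ : ℝ≥0∞) ^ 2 := by
  classical
  set c : ℝ := x₀ * t with c_def
  have hc : c ≠ 0 := mul_ne_zero (ne_of_gt hx₀) ht
  set Sl : ℝ≥0∞ := ∫⁻ b : Fin p → ℝ, (‖partialFourierFst p f t b‖₊ : ℝ≥0∞) ^ 2 with Sl_def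
  set box : Set (Fin p → ℝ) := Set.pi Set.univ (fun _ : Fin p => Set.Icc (-1 : ℝ) 1) with box_def
  have hbox : MeasurableSet box := MeasurableSet.univ_pi fun _ => measurableSet_Icc
  set Φ : (Fin p → ℝ) → ℝ≥0∞ := fun v => (‖paperFourier p f t v‖₊ : ℝ≥0∞) ^ 2 with Φ_def
  set Cp : ℝ := (2 * Real.pi / (x₀ * |t|)) ^ p with Cp_def
  have hCp : 0 ≤ Cp := by positivity
  -- the bound for each ε > 0
  have main : ∀ ε : ℝ, 0 < ε →
      (∫⁻ u in box, Φ ((x₀ * t) • u)) ≤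
        ENNReal.ofReal (Real.exp (ε * (c ^ 2 * p)) * Cp) * Sl := by
    intro ε hε
    set w : (Fin p → ℝ) → ℝ := fun v => Real.exp (-ε * ∑ j, v j ^ 2) with w_def
    set M : ℝ := ε * (c ^ 2 * p) with M_def
    -- pointwise indicator bound
    have ptwise : ∀ u : Fin p → ℝ, box.indicator (fun u => Φ (c • u)) u ≤
        ENNReal.ofReal (Real.exp M) * (Φ (c • u) * ENNReal.ofReal (w (c • u))) := by
      intro u
      by_cases hu : u ∈ box
      · rw [Set.indicator_of_mem hu]
        have hsum : ∑ j, (c * u j) ^ 2 ≤ c ^ 2 * p := by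
          have : ∀ j : Fin p, (c * u j) ^ 2 ≤ c ^ 2 := by
            intro j
            have h1 := (hu j (Set.mem_univ j)).1
            have h2 := (hu j (Set.mem_univ j)).2
            have : u j ^ 2 ≤ 1 := by nlinarith
            calc (c * u j) ^ 2 = c ^ 2 * u j ^ 2 := by ring
              _ ≤ c ^ 2 * 1 := by nlinarith [sq_nonneg c]
              _ = c ^ 2 := mul_one _
          calc ∑ j, (c * u j) ^ 2 ≤ ∑ _j : Fin p, c ^ 2 := Finset.sum_le_sum fun j _ => this j
            _ = c ^ 2 * p := by
                simp only [Finset.sum_const, Finset.card_univ, Fintype.card_fin, nsmul_eq_mul]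
                ring
        have hwge : 1 ≤ Real.exp M * w (c • u) := by
          rw [w_def, ← Real.exp_add]
          have harg : ∑ j, ((c • u) j) ^ 2 = ∑ j, (c * u j) ^ 2 := by
            refine Finset.sum_congr rfl fun j _ => by rw [Pi.smul_apply, smul_eq_mul]
          rw [show M + -ε * ∑ j, ((c • u) j) ^ 2 = M - ε * ∑ j, ((c • u) j) ^ 2 by ring]
          rw [harg]
          have : 0 ≤ M - ε * ∑ j, (c * u j) ^ 2 := by
            rw [M_def]
            nlinarith [hsum, hε.le]
          calc (1:ℝ) = Real.exp 0 := Real.exp_zero.symm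
            _ ≤ _ := Real.exp_le_exp.mpr this
        calc Φ (c • u) = 1 * Φ (c • u) := (one_mul _).symm
          _ ≤ (ENNReal.ofReal (Real.exp M) * ENNReal.ofReal (w (c • u))) * Φ (c • u) := by
              refine mul_le_mul_left ?_ _
              rw [← ENNReal.ofReal_mul (Real.exp_nonneg _), ← ENNReal.ofReal_one]
              exact ENNReal.ofReal_le_ofReal hwge
          _ = ENNReal.ofReal (Real.exp M) * (Φ (c • u) * ENNReal.ofReal (w (c • u))) := by
              ring
      · rw [Set.indicator_of_notMem hu]
        exact zero_le
    -- change of variables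
    have cov : (∫⁻ u : Fin p → ℝ, Φ (c • u) * ENNReal.ofReal (w (c • u)))
        = ENNReal.ofReal (|(c ^ p : ℝ)|⁻¹) *
            ∫⁻ v : Fin p → ℝ, Φ v * ENNReal.ofReal (w v) := by
      have e1 : (∫⁻ u : Fin p → ℝ, Φ (c • u) * ENNReal.ofReal (w (c • u)))
          = ∫⁻ v : Fin p → ℝ, Φ v * ENNReal.ofReal (w v)
              ∂(Measure.map (c • · : (Fin p → ℝ) → (Fin p → ℝ)) volume) := by
        rw [show Measure.map (c • · : (Fin p → ℝ) → (Fin p → ℝ)) volume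
            = Measure.map (MeasurableEquiv.smul₀ (α := Fin p → ℝ) c hc) volume by
          rw [MeasurableEquiv.coe_smul₀]]
        rw [MeasureTheory.lintegral_map_equiv]
        rfl
      rw [e1, Measure.map_addHaar_smul (volume : Measure (Fin p → ℝ)) hc,
        lintegral_smul_measure]
      congr 2
      rw [Module.finrank_fin_fun, abs_inv]
    have ch1 : (∫⁻ u in box, Φ ((x₀ * t) • u))
        = ∫⁻ u : Fin p → ℝ, box.indicator (fun u => Φ (c • u)) u := by
      rw [lintegral_indicator hbox]
    rw [ch1]
    calc (∫⁻ u : Fin p → ℝ, box.indicator (fun u => Φ (c • u)) u)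
        ≤ ∫⁻ u : Fin p → ℝ, ENNReal.ofReal (Real.exp M) *
            (Φ (c • u) * ENNReal.ofReal (w (c • u))) := lintegral_mono ptwise
      _ = ENNReal.ofReal (Real.exp M) *
            ∫⁻ u : Fin p → ℝ, Φ (c • u) * ENNReal.ofReal (w (c • u)) :=
          lintegral_const_mul' _ _ ENNReal.ofReal_ne_top
      _ = ENNReal.ofReal (Real.exp M) * (ENNReal.ofReal (|(c ^ p : ℝ)|⁻¹) *
            ∫⁻ v : Fin p → ℝ, Φ v * ENNReal.ofReal (w v)) := by rw [cov]
      _ ≤ ENNReal.ofReal (Real.exp M) * (ENNReal.ofReal (|(c ^ p : ℝ)|⁻¹) *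
            (ENNReal.ofReal ((2 * Real.pi) ^ p) * Sl)) := by
          refine mul_le_mul_right (mul_le_mul_right ?_ _) _
          exact FCS.key_ennreal hfi hε hL2
      _ = ENNReal.ofReal (Real.exp M * Cp) * Sl := by
          rw [← mul_assoc, ← mul_assoc, ← ENNReal.ofReal_mul (Real.exp_nonneg _),
            ← ENNReal.ofReal_mul (by positivity)]
          congr 2
          rw [Cp_def]
          have habs : |(c ^ p : ℝ)| = (x₀ * |t|) ^ p := by
            rw [_root_.abs_pow, c_def, abs_mul, _root_.abs_of_pos hx₀]
          rw [habs, div_pow]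
          field_simp
  -- let ε → 0
  have hSl : Sl ≠ ⊤ := hL2.ne
  have lim : Filter.Tendsto
      (fun ε : ℝ => ENNReal.ofReal (Real.exp (ε * (c ^ 2 * p)) * Cp) * Sl)
      (nhdsWithin 0 (Set.Ioi 0)) (nhds (ENNReal.ofReal Cp * Sl)) := by
    have hreal : Filter.Tendsto (fun ε : ℝ => Real.exp (ε * (c ^ 2 * p)) * Cp)
        (nhdsWithin 0 (Set.Ioi 0)) (nhds Cp) := by
      have hcont : Continuous (fun ε : ℝ => Real.exp (ε * (c ^ 2 * p)) * Cp) := by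
        fun_prop
      have := hcont.tendsto 0
      simp only [zero_mul, Real.exp_zero, one_mul] at this
      exact this.mono_left nhdsWithin_le_nhds
    exact ENNReal.Tendsto.mul_const
      ((ENNReal.continuous_ofReal.tendsto _).comp hreal) (Or.inr hSl)
  refine ge_of_tendsto lim ?_
  exact Filter.eventually_of_mem self_mem_nhdsWithin fun ε hε => main ε hε
end
end

section
/- Let p ∈ ℕ. Let (α,β) be an ℝ^{1+p}-valued random vector with (Lebesgue) density f, and let X be an ℝ^p-valued random vector, defined on the same probability space and independent of (α,β). Set Y = α + βᵀX. Then for every t ∈ ℝ, almost surely, E[e^{itY} | X] = 𝓕[f](t, tX), where 𝓕[f](t,v) = ∫_{ℝ^{1+p}} e^{i(t a + v·b)} f(a,b) da db. -/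
open MeasureTheory Set
open scoped ENNReal

/-- Freezing lemma: if `Z` and `X` are independent and `g` is bounded measurable, then
`E[g(Z,X) | σ(X)] = (x ↦ ∫ g(z,x) d(law Z)) ∘ X` almost surely. -/
lemma condexp_indep_comp
    {Ω : Type*} [MeasurableSpace Ω] (μ : Measure Ω) [IsProbabilityMeasure μ]
    {γ δ : Type*} [MeasurableSpace γ] [MeasurableSpace δ]
    (Z : Ω → γ) (X : Ω → δ) (hZ : Measurable Z) (hX : Measurable X)
    (hindep : ProbabilityTheory.IndepFun Z X μ)
    (g : γ × δ → ℂ) (hg : Measurable g) (hbdd : ∀ q, ‖g q‖ ≤ 1) :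
    μ[fun ω => g (Z ω, X ω) | MeasurableSpace.comap X inferInstance]
      =ᵐ[μ] fun ω => ∫ z, g (z, X ω) ∂(Measure.map Z μ) := by
  set ν : Measure γ := Measure.map Z μ with hν
  set χ : Measure δ := Measure.map X μ with hχ
  haveI : IsProbabilityMeasure ν := Measure.isProbabilityMeasure_map hZ.aemeasurable
  haveI : IsProbabilityMeasure χ := Measure.isProbabilityMeasure_map hX.aemeasurable
  set G : δ → ℂ := fun x => ∫ z, g (z, x) ∂ν with hG
  have hg' : Measurable fun q : δ × γ => g (q.2, q.1) := hg.comp (by fun_prop)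
  have hGm : Measurable G := by
    have := (hg'.stronglyMeasurable).integral_prod_right' (ν := ν)
    exact this.measurable
  have hGbdd : ∀ x, ‖G x‖ ≤ 1 := by
    intro x
    calc ‖G x‖ ≤ ∫ z, ‖g (z, x)‖ ∂ν := norm_integral_le_integral_norm _
    _ ≤ ∫ _z, (1 : ℝ) ∂ν := by
        refine integral_mono_of_nonneg (ae_of_all _ fun z => norm_nonneg _)
          (integrable_const 1) (ae_of_all _ fun z => hbdd _)
    _ = 1 := by simp
  have hle : MeasurableSpace.comap X inferInstance ≤ ‹MeasurableSpace Ω› := hX.comap_le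
  have hmXZ : Measurable fun ω => (X ω, Z ω) := hX.prodMk hZ
  have hmap : Measure.map (fun ω => (X ω, Z ω)) μ = χ.prod ν :=
    (ProbabilityTheory.indepFun_iff_map_prod_eq_prod_map_map hX.aemeasurable
      hZ.aemeasurable).mp hindep.symm
  have hgXZ : Measurable fun ω => g (Z ω, X ω) := hg.comp (hZ.prodMk hX)
  have hint : Integrable (fun ω => g (Z ω, X ω)) μ :=
    Integrable.mono' (integrable_const 1) hgXZ.aestronglyMeasurable
      (ae_of_all _ fun ω => hbdd _)
  refine (ae_eq_condExp_of_forall_setIntegral_eq hle hint ?_ ?_ ?_).symm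
  · intro s _ _
    exact Integrable.mono' (integrable_const 1)
      ((hGm.comp hX).aestronglyMeasurable.restrict)
      (ae_of_all _ fun ω => hGbdd _)
  · rintro s ⟨E, hE, rfl⟩ _
    have hintg' : Integrable (fun q : δ × γ => g (q.2, q.1)) (χ.prod ν) :=
      Integrable.mono' (integrable_const 1) hg'.aestronglyMeasurable
        (ae_of_all _ fun q => hbdd _)
    have key : ∫ ω in X ⁻¹' E, g (Z ω, X ω) ∂μ
        = ∫ q in E ×ˢ (Set.univ : Set γ), g (q.2, q.1) ∂(χ.prod ν) := by
      calc ∫ ω in X ⁻¹' E, g (Z ω, X ω) ∂μ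
          = ∫ ω in (fun ω => (X ω, Z ω)) ⁻¹' (E ×ˢ (Set.univ : Set γ)),
              (fun q : δ × γ => g (q.2, q.1)) (X ω, Z ω) ∂μ := by
            have hset : X ⁻¹' E = (fun ω => (X ω, Z ω)) ⁻¹' (E ×ˢ (Set.univ : Set γ)) := by
              ext ω; simp
            rw [hset]
        _ = ∫ q in E ×ˢ (Set.univ : Set γ), g (q.2, q.1)
              ∂(Measure.map (fun ω => (X ω, Z ω)) μ) :=
            (setIntegral_map (hE.prod MeasurableSet.univ)
              hg'.aestronglyMeasurable hmXZ.aemeasurable).symm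
        _ = ∫ q in E ×ˢ (Set.univ : Set γ), g (q.2, q.1) ∂(χ.prod ν) := by rw [hmap]
    have key2 : ∫ q in E ×ˢ (Set.univ : Set γ), g (q.2, q.1) ∂(χ.prod ν)
        = ∫ x in E, G x ∂χ := by
      rw [setIntegral_prod _ (hintg'.integrableOn)]
      simp [hG]
    have key3 : ∫ ω in X ⁻¹' E, G (X ω) ∂μ = ∫ x in E, G x ∂χ := by
      rw [hχ, ← setIntegral_map hE (hGm.aestronglyMeasurable) hX.aemeasurable]
    rw [key3, key, key2]
  · exact StronglyMeasurable.aestronglyMeasurable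
      (hGm.stronglyMeasurable.comp_measurable (measurable_iff_comap_le.mpr le_rfl))

/-- The identification identity of the random coefficients model: if `(α,β)` has density `f`,
is independent of `X`, and `Y = α + βᵀX`, then for every `t`, almost surely
`E[e^{itY} | X] = 𝓕[f](t, tX)`. -/
theorem condexp_char_fun_eq_fourier_of_indep
    {Ω : Type*} [MeasurableSpace Ω] (μ : Measure Ω) [IsProbabilityMeasure μ]
    (p : ℕ) (A : Ω → ℝ) (B : Ω → Fin p → ℝ) (X : Ω → Fin p → ℝ)
    (hA : Measurable A) (hB : Measurable B) (hX : Measurable X)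
    (hindep : ProbabilityTheory.IndepFun (fun ω => (A ω, B ω)) X μ)
    (f : ℝ × (Fin p → ℝ) → ℝ) (hfm : Measurable f) (hf0 : ∀ q, 0 ≤ f q)
    (hdens : Measure.map (fun ω => (A ω, B ω)) μ =
      volume.withDensity fun q => ENNReal.ofReal (f q))
    (t : ℝ) :
    μ[fun ω => Complex.exp (Complex.I * ((t * (A ω + ∑ j, B ω j * X ω j) : ℝ) : ℂ)) |
        MeasurableSpace.comap X inferInstance] =ᵐ[μ]
      fun ω => paperFourier p (fun q => (f q : ℂ)) t (t • X ω) := by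
  set g : (ℝ × (Fin p → ℝ)) × (Fin p → ℝ) → ℂ := fun q =>
    Complex.exp (Complex.I * ((t * (q.1.1 + ∑ j, q.1.2 j * q.2 j) : ℝ) : ℂ)) with hg_def
  have hgc : Continuous g := by
    apply Complex.continuous_exp.comp
    apply Continuous.mul continuous_const
    apply Complex.continuous_ofReal.comp
    fun_prop
  have hbdd : ∀ q, ‖g q‖ ≤ 1 := by
    intro q
    rw [hg_def]
    simp only [Complex.norm_exp]
    have : (Complex.I * ((t * (q.1.1 + ∑ j, q.1.2 j * q.2 j) : ℝ) : ℂ)).re = 0 := by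
      simp [Complex.mul_re]
    rw [this, Real.exp_zero]
  have hmain := condexp_indep_comp μ (fun ω => (A ω, B ω)) X (hA.prodMk hB) hX hindep
    g hgc.measurable hbdd
  refine hmain.trans (ae_of_all _ fun ω => ?_)
  rw [hdens]
  simp only [paperFourier]
  have hdw : (volume : Measure (ℝ × (Fin p → ℝ))).withDensity
      (fun q => ENNReal.ofReal (f q)) =
      (volume : Measure (ℝ × (Fin p → ℝ))).withDensity
      (fun q => ((Real.toNNReal (f q) : NNReal) : ℝ≥0∞)) := rfl
  rw [hdw, integral_withDensity_eq_integral_smul (by fun_prop)]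
  refine integral_congr_ae (ae_of_all _ fun q => ?_)
  have hexp : t * (q.1 + ∑ j, q.2 j * X ω j) = t * q.1 + ∑ j, (t • X ω) j * q.2 j := by
    rw [mul_add, Finset.mul_sum]
    congr 1
    refine Finset.sum_congr rfl fun j _ => ?_
    simp [Pi.smul_apply, smul_eq_mul]
    ring
  rw [hg_def]
  simp only
  rw [hexp]
  rw [NNReal.smul_def, Real.coe_toNNReal _ (hf0 q)]
  rw [Complex.real_smul]
  ring
end
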